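/- Let Γ be a simple polygon, A a finite set of points in Γ, and consider the visibility decomposition of Γ with respect to A. Then any two points in the interior of a single visibility region are seen by exactly the same subset of points of A. -/

import Mathlib

open Set

noncomputable section

/-- Points of the Euclidean plane. -/
abbrev Pt : Type := EuclideanSpace ℝ (Fin 2)

/-- A simple polygon: a compact region of the plane bounded by a simple closed
polygonal curve.  Vertices are indexed by `ℤ`, periodically with period `n`. -/
structure SimplePolygon where
  carrier : Set Pt
  n : ℕ
  three_le : 3 ≤ n
  vertex : ℤ → Pt
  periodic : ∀ i : ℤ, vertex (i + n) = vertex i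
  vertex_inj : ∀ i j : ℤ, 0 ≤ i → i < n → 0 ≤ j → j < n → vertex i = vertex j → i = j
  compact : IsCompact carrier
  connected : IsConnected carrier
  regular : carrier = closure (interior carrier)
  boundary_eq : frontier carrier = ⋃ i : ℤ, segment ℝ (vertex i) (vertex (i + 1))
  adj_edges : ∀ i j : ℤ, (n : ℤ) ∣ (j - (i + 1)) → ¬ (n : ℤ) ∣ (j - i) →
    segment ℝ (vertex i) (vertex (i + 1)) ∩ segment ℝ (vertex j) (vertex (j + 1)) = {vertex j}
  nonadj_edges : ∀ i j : ℤ, ¬ (n : ℤ) ∣ (j - i) → ¬ (n : ℤ) ∣ (j - (i + 1)) →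
    ¬ (n : ℤ) ∣ (i - (j + 1)) →
    Disjoint (segment ℝ (vertex i) (vertex (i + 1))) (segment ℝ (vertex j) (vertex (j + 1)))

/-- `A`, `B` span a (maximal) boundary segment of the set `R`. -/
def IsBoundarySegment (R : Set Pt) (A B : Pt) : Prop :=
  A ≠ B ∧ segment ℝ A B ⊆ frontier R ∧
  ∀ A' B' : Pt, segment ℝ A B ⊆ segment ℝ A' B' → segment ℝ A' B' ⊆ frontier R →
    segment ℝ A' B' = segment ℝ A B

/-- `ℓ` is a support line of `R`: a line containing a boundary segment of the closure of `R`. -/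
def IsSupportLine (R : Set Pt) (ℓ : AffineSubspace ℝ Pt) : Prop :=
  ∃ A B : Pt, IsBoundarySegment (closure R) A B ∧ ℓ = affineSpan ℝ ({A, B} : Set Pt)

/-- Two regions are adjacent when they share a common boundary edge
(a nondegenerate segment). -/
def AdjacentRegions (R R' : Set Pt) : Prop :=
  R ≠ R' ∧ ∃ C D : Pt, C ≠ D ∧ segment ℝ C D ⊆ closure R ∩ closure R'

namespace SimplePolygon

variable (Γ : SimplePolygon)

/-- `G` sees `A`: the segment `GA` is contained in the polygon. -/
def Sees (G A : Pt) : Prop := segment ℝ G A ⊆ Γ.carrier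

/-- The guard set `F` (visually) covers the set `S`. -/
def Covers (F S : Set Pt) : Prop := ∀ A ∈ S, ∃ G ∈ F, Γ.Sees G A

/-- The view of a point `P`: all points of the polygon seen by `P`. -/
def View (P : Pt) : Set Pt := {A | A ∈ Γ.carrier ∧ Γ.Sees P A}

/-- The hidden region of a guard configuration `F`: points of the polygon seen by no guard. -/
def Hidden (F : Set Pt) : Set Pt := {A | A ∈ Γ.carrier ∧ ∀ G ∈ F, ¬ Γ.Sees G A}

/-- The polygon is normal: every configuration of guards covering the walls covers everything. -/
def Normal : Prop :=
  ∀ F : Set Pt, F ⊆ Γ.carrier → Γ.Covers F (frontier Γ.carrier) → Γ.Covers F Γ.carrier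

/-- The polygon is normal with respect to `A`: every configuration of guards inside `A`
covering the walls covers everything. -/
def NormalWrt (A : Set Pt) : Prop :=
  ∀ F : Set Pt, F ⊆ A → Γ.Covers F (frontier Γ.carrier) → Γ.Covers F Γ.carrier

/-- The corner at `vertex i` is reflex (interior angle exceeding 180°): points slightly
displaced from the vertex in the direction bisecting the (undirected) corner angle lie
outside the polygon. -/
def IsReflexCorner (i : ℤ) : Prop :=
  ∃ δ > (0 : ℝ), ∀ ε : ℝ, 0 < ε → ε < δ →
    Γ.vertex i + ε • ((Γ.vertex (i - 1) - Γ.vertex i) + (Γ.vertex (i + 1) - Γ.vertex i)) ∉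
      Γ.carrier

/-- The set of (indices in one period of) reflex corners of the polygon. -/
def reflexCorners : Set ℤ := {i : ℤ | 0 ≤ i ∧ i < Γ.n ∧ Γ.IsReflexCorner i}

/-- `(P, i)` is a feasible pair: `vertex i` is a reflex corner visible from `P` and the two
walls at the corner lie (weakly) on the same side of the line through `P` and `vertex i`. -/
def IsFeasible (P : Pt) (i : ℤ) : Prop :=
  Γ.IsReflexCorner i ∧ P ≠ Γ.vertex i ∧ Γ.Sees P (Γ.vertex i) ∧
  ∃ f : Pt →ₗ[ℝ] ℝ, f ≠ 0 ∧ f (Γ.vertex i - P) = 0 ∧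
    0 ≤ f (Γ.vertex (i - 1) - P) ∧ 0 ≤ f (Γ.vertex (i + 1) - P)

/-- `w` is a window of `P`: the segment from a reflex corner `C = vertex i` of a feasible
pair `(P, i)` to the farthest boundary point visible from `P` on the ray `P C` beyond `C`. -/
def IsWindow (P : Pt) (w : Set Pt) : Prop :=
  ∃ i : ℤ, ∃ W : Pt, Γ.IsFeasible P i ∧
    (∃ t : ℝ, 0 ≤ t ∧ W = Γ.vertex i + t • (Γ.vertex i - P)) ∧
    W ∈ frontier Γ.carrier ∧ Γ.Sees P W ∧
    (∀ W' : Pt, (∃ t : ℝ, 0 ≤ t ∧ W' = Γ.vertex i + t • (Γ.vertex i - P)) →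
      W' ∈ frontier Γ.carrier → Γ.Sees P W' → dist P W' ≤ dist P W) ∧
    w = segment ℝ (Γ.vertex i) W

/-- The union of all windows of points of `A`. -/
def windows (A : Set Pt) : Set Pt := ⋃₀ {w : Set Pt | ∃ P ∈ A, Γ.IsWindow P w}

/-- The (interiors of the) visibility regions of the visibility decomposition of the polygon
with respect to `A`: connected components of the interior of the polygon with all windows
removed. -/
def regionInteriors (A : Set Pt) : Set (Set Pt) :=
  {R : Set Pt | ∃ x ∈ interior Γ.carrier \ Γ.windows A,
    R = connectedComponentIn (interior Γ.carrier \ Γ.windows A) x}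

/-- `P` sees every point of `R`. -/
def SeesAll (P : Pt) (R : Set Pt) : Prop := ∀ x ∈ R, Γ.Sees P x

/-- `V(R)`: the set of points of `A` that see the (interior of the) region `R`. -/
def Vset (A R : Set Pt) : Set Pt := {P ∈ A | Γ.SeesAll P R}

/-- `R` is a sink of the visibility decomposition with respect to `A`. -/
def IsSink (A R : Set Pt) : Prop :=
  R ∈ Γ.regionInteriors A ∧
  ∀ R' ∈ Γ.regionInteriors A, AdjacentRegions R R' → Γ.Vset A R ⊆ Γ.Vset A R'

end SimplePolygon

namespace VisAux

open Metric

/-! ### Plane algebra helpers -/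

/-- The cross product of two planar vectors. -/
def cross (u w : Pt) : ℝ := u 0 * w 1 - u 1 * w 0

lemma cross_self (u : Pt) : cross u u = 0 := by simp [cross]; ring

lemma pt_ext {u w : Pt} (h0 : u 0 = w 0) (h1 : u 1 = w 1) : u = w := by
  ext i
  fin_cases i <;> assumption

lemma smul_apply' (c : ℝ) (u : Pt) (i : Fin 2) : (c • u) i = c * u i := rfl

lemma add_apply' (u w : Pt) (i : Fin 2) : (u + w) i = u i + w i := rfl

lemma sub_apply' (u w : Pt) (i : Fin 2) : (u - w) i = u i - w i := rfl

lemma eq_zero_iff (u : Pt) : u = 0 ↔ u 0 = 0 ∧ u 1 = 0 := by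
  constructor
  · rintro rfl; exact ⟨rfl, rfl⟩
  · rintro ⟨h0, h1⟩; exact pt_ext (by simpa using h0) (by simpa using h1)

/-- If `cross e d = 0` and `d ≠ 0` then `e` is a multiple of `d`. -/
lemma exists_smul_of_cross_eq_zero {e d : Pt} (hd : d ≠ 0) (h : cross e d = 0) :
    ∃ c : ℝ, e = c • d := by
  rcases eq_or_ne (d 0) 0 with h0 | h0
  · have h1 : d 1 ≠ 0 := by
      intro h1; exact hd ((eq_zero_iff d).2 ⟨h0, h1⟩)
    refine ⟨e 1 / d 1, pt_ext ?_ ?_⟩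
    · rw [smul_apply']
      have : e 0 * d 1 = e 1 * d 0 := by unfold cross at h; linarith
      rw [h0] at this ⊢
      rw [mul_zero] at this
      rcases mul_eq_zero.1 this with h|h
      · rw [h]; ring
      · exact absurd h h1
    · rw [smul_apply']; field_simp
  · refine ⟨e 0 / d 0, pt_ext ?_ ?_⟩
    · rw [smul_apply']; field_simp
    · rw [smul_apply']
      have : e 0 * d 1 = e 1 * d 0 := by unfold cross at h; linarith
      field_simp
      linarith

/-- A linear functional on the plane with the given coefficients. -/
def mkLin (c0 c1 : ℝ) : Pt →ₗ[ℝ] ℝ where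
  toFun w := c0 * w 0 + c1 * w 1
  map_add' u w := by
    show c0 * (u + w) 0 + c1 * (u + w) 1 = _
    rw [add_apply', add_apply']; ring
  map_smul' c u := by
    show c0 * (c • u) 0 + c1 * (c • u) 1 = _
    rw [smul_apply', smul_apply']; simp; ring

lemma mkLin_apply (c0 c1 : ℝ) (w : Pt) : mkLin c0 c1 w = c0 * w 0 + c1 * w 1 := rfl

end VisAux
namespace VisAux

open Metric

lemma isCompact_segment' (a b : Pt) : IsCompact (segment ℝ a b) := by
  rw [segment_eq_image']
  exact isCompact_Icc.image (by continuity)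

lemma isClosed_segment' (a b : Pt) : IsClosed (segment ℝ a b) :=
  (isCompact_segment' a b).isClosed

lemma mem_segment_param {P q y : Pt} :
    y ∈ segment ℝ P q ↔ ∃ t : ℝ, 0 ≤ t ∧ t ≤ 1 ∧ y = P + t • (q - P) := by
  rw [segment_eq_image']
  constructor
  · rintro ⟨t, ⟨h0, h1⟩, rfl⟩; exact ⟨t, h0, h1, rfl⟩
  · rintro ⟨t, h0, h1, rfl⟩; exact ⟨t, ⟨h0, h1⟩, rfl⟩

lemma param_mem_segment {P q : Pt} {t : ℝ} (h0 : 0 ≤ t) (h1 : t ≤ 1) :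
    P + t • (q - P) ∈ segment ℝ P q :=
  mem_segment_param.2 ⟨t, h0, h1, rfl⟩

/-- Extending sight along a ray. -/
lemma sees_extend (Γ : SimplePolygon) {P u : Pt} {s₀ s : ℝ} (h0 : 0 ≤ s₀) (hs : s₀ ≤ s)
    (h1 : Γ.Sees P (P + s₀ • u)) (h2 : segment ℝ (P + s₀ • u) (P + s • u) ⊆ Γ.carrier) :
    Γ.Sees P (P + s • u) := by
  intro y hy
  rcases mem_segment_param.1 hy with ⟨t, ht0, ht1, rfl⟩
  have hys : P + t • (P + s • u - P) = P + (t * s) • u := by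
    rw [add_sub_cancel_left, smul_smul]
  rw [hys]
  rcases le_or_gt (t * s) s₀ with hle | hlt
  · rcases eq_or_lt_of_le h0 with h0' | h0'
    · -- s₀ = 0, so t * s ≤ 0; but 0 ≤ t*s... then t*s = 0
      have hts : 0 ≤ t * s := mul_nonneg ht0 (le_trans h0 hs)
      have : t * s = 0 := le_antisymm (by rw [← h0'] at hle; exact hle) hts
      rw [this]
      apply h1
      rw [← h0']
      simpa using left_mem_segment ℝ P (P + (0:ℝ) • u)
    · -- 0 < s₀ : the point is P + ((t*s)/s₀) • (P + s₀ • u - P)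
      apply h1
      rw [mem_segment_param]
      have hts : 0 ≤ t * s := mul_nonneg ht0 (le_trans h0 hs)
      refine ⟨t * s / s₀, div_nonneg hts (le_of_lt h0'), by
        rw [div_le_one h0']; exact hle, ?_⟩
      rw [add_sub_cancel_left, smul_smul]
      rw [div_mul_cancel₀]
      exact ne_of_gt h0'
  · -- between s₀ and s
    apply h2
    rw [mem_segment_param]
    have hs0 : 0 ≤ s := le_trans h0 hs
    have htss : t * s ≤ s := by nlinarith
    have hss : s₀ < s := lt_of_lt_of_le hlt htss
    have hpos : 0 < s - s₀ := by linarith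
    refine ⟨(t * s - s₀) / (s - s₀), div_nonneg (by linarith) (le_of_lt hpos),
      by rw [div_le_one hpos]; linarith, ?_⟩
    have : P + s • u - (P + s₀ • u) = (s - s₀) • u := by
      rw [add_sub_add_left_eq_sub, ← sub_smul]
    rw [this, smul_smul, div_mul_cancel₀ _ (ne_of_gt hpos)]
    rw [sub_smul]
    abel

lemma compl_frontier_sub {C : Set Pt} {y : Pt} (h : y ∉ frontier C) :
    y ∈ interior C ∨ y ∈ interior Cᶜ := by
  by_cases hy : y ∈ closure C
  · left
    rcases frontier_eq_closure_inter_closure (s := C) ▸ h with h'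
    simp only [frontier] at h
    rcases not_and_or.1 (fun hc => h (mem_diff_of_mem hc.1 hc.2)) with h' | h'
    · exact absurd hy h'
    · simpa using h'
  · right
    rw [interior_compl]
    exact hy

/-- Dichotomy: a convex set avoiding the frontier of `C` that meets `C` lies in its interior. -/
lemma convex_subset_interior {C U : Set Pt} (hU : Convex ℝ U)
    (hF : ∀ y ∈ U, y ∉ frontier C) {p : Pt} (hp : p ∈ U) (hpC : p ∈ C) :
    U ⊆ interior C := by
  have hsub : U ⊆ interior C ∪ interior Cᶜ := fun y hy => compl_frontier_sub (hF y hy)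
  have hdisj : Disjoint (interior C) (interior Cᶜ) :=
    Disjoint.mono interior_subset interior_subset disjoint_compl_right
  rcases (hU.isPreconnected).subset_or_subset isOpen_interior isOpen_interior hdisj hsub with h | h
  · exact h
  · exfalso
    exact (interior_subset (h hp) : (p ∈ Cᶜ)) hpC

/-- The set of points seen from `P` is closed. -/
lemma isClosed_sees (Γ : SimplePolygon) (P : Pt) : IsClosed {y : Pt | Γ.Sees P y} := by
  have : {y : Pt | Γ.Sees P y} =
      ⋂ t ∈ Icc (0:ℝ) 1, (fun y => P + t • (y - P)) ⁻¹' Γ.carrier := by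
    ext y
    simp only [mem_iInter, mem_preimage, mem_setOf_eq]
    constructor
    · intro h t ht
      exact h (param_mem_segment ht.1 ht.2)
    · intro h q hq
      rcases mem_segment_param.1 hq with ⟨t, h0, h1, rfl⟩
      exact h t ⟨h0, h1⟩
  rw [this]
  exact isClosed_biInter fun t _ =>
    (Γ.compact.isClosed).preimage
      (continuous_const.add ((continuous_id.sub continuous_const).const_smul t))

end VisAux
namespace VisAux

open Metric

variable (Γ : SimplePolygon)

/-- The `i`-th edge. -/
def E (i : ℤ) : Set Pt := segment ℝ (Γ.vertex i) (Γ.vertex (i + 1))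

lemma npos : 0 < (Γ.n : ℤ) := by
  have := Γ.three_le; omega

lemma vertex_congr {i j : ℤ} (h : (Γ.n : ℤ) ∣ i - j) : Γ.vertex i = Γ.vertex j := by
  obtain ⟨k, hk⟩ := h
  have hij : i = j + k * Γ.n := by linarith
  subst hij
  clear hk
  induction k using Int.induction_on with
  | zero => simp
  | succ m ih =>
      have : j + (m + 1) * Γ.n = (j + m * Γ.n) + Γ.n := by ring
      rw [this, Γ.periodic, ih]
  | pred m ih =>
      have hper := Γ.periodic (j + (-(m:ℤ) - 1) * Γ.n)
      have h2 : j + (-(m:ℤ) - 1) * Γ.n + Γ.n = j + (-(m:ℤ)) * Γ.n := by ring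
      rw [h2] at hper
      calc Γ.vertex (j + (-(m:ℤ) - 1) * Γ.n) = Γ.vertex (j + (-(m:ℤ)) * Γ.n) := hper.symm
        _ = Γ.vertex j := ih

lemma vertex_eq_dvd {i j : ℤ} (h : Γ.vertex i = Γ.vertex j) : (Γ.n : ℤ) ∣ i - j := by
  have hn := npos Γ
  have hi : Γ.vertex (i % Γ.n) = Γ.vertex i := vertex_congr Γ (by
    have := Int.emod_def i (Γ.n : ℤ); exact ⟨-(i / Γ.n), by linarith⟩)
  have hj : Γ.vertex (j % Γ.n) = Γ.vertex j := vertex_congr Γ (by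
    have := Int.emod_def j (Γ.n : ℤ); exact ⟨-(j / Γ.n), by linarith⟩)
  have heq : i % Γ.n = j % Γ.n := by
    apply Γ.vertex_inj _ _ (Int.emod_nonneg i (ne_of_gt hn)) (Int.emod_lt_of_pos i hn)
      (Int.emod_nonneg j (ne_of_gt hn)) (Int.emod_lt_of_pos j hn)
    rw [hi, hj, h]
  have : i ≡ j [ZMOD Γ.n] := heq
  have := Int.ModEq.dvd this
  exact (dvd_sub_comm).1 this

lemma vertex_ne_succ (m : ℤ) : Γ.vertex m ≠ Γ.vertex (m + 1) := by
  intro h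
  have hd := vertex_eq_dvd Γ h
  have h2 : (Γ.n : ℤ) ∣ 1 := by
    have he : m - (m + 1) = -1 := by ring
    rw [he] at hd
    exact dvd_neg.1 hd
  have := Int.le_of_dvd one_pos h2
  have := Γ.three_le
  omega

lemma edge_congr {i j : ℤ} (h : (Γ.n : ℤ) ∣ i - j) : E Γ i = E Γ j := by
  unfold E
  rw [vertex_congr Γ h, vertex_congr Γ (i := i + 1) (j := j + 1) (by
    have h2 : i + 1 - (j + 1) = i - j := by ring
    rw [h2]; exact h)]

lemma frontier_mem_edge {z : Pt} (hz : z ∈ frontier Γ.carrier) :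
    ∃ k : ℤ, 0 ≤ k ∧ k < Γ.n ∧ z ∈ E Γ k := by
  rw [Γ.boundary_eq] at hz
  rcases mem_iUnion.1 hz with ⟨i, hi⟩
  have hn := npos Γ
  refine ⟨i % Γ.n, Int.emod_nonneg i (ne_of_gt hn), Int.emod_lt_of_pos i hn, ?_⟩
  have : E Γ (i % Γ.n) = E Γ i := edge_congr Γ (by
    have := Int.emod_def i (Γ.n : ℤ); exact ⟨-(i / Γ.n), by linarith⟩)
  rw [this]
  exact hi

lemma edge_subset_frontier (i : ℤ) : E Γ i ⊆ frontier Γ.carrier := by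
  rw [Γ.boundary_eq]
  exact subset_iUnion (fun i : ℤ => segment ℝ (Γ.vertex i) (Γ.vertex (i+1))) i

/-- A vertex lies only on its two adjacent edges. -/
lemma vertex_mem_edge {m j : ℤ} (h : Γ.vertex m ∈ E Γ j) :
    (Γ.n : ℤ) ∣ j - m ∨ (Γ.n : ℤ) ∣ j - (m - 1) := by
  by_contra hc
  push_neg at hc
  obtain ⟨h1, h2⟩ := hc
  by_cases h3 : (Γ.n : ℤ) ∣ j - (m + 1)
  · -- adjacent on the other side : E m ∩ E j = {vertex j}
    have := Γ.adj_edges m j h3 h1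
    have hmem : Γ.vertex m ∈ segment ℝ (Γ.vertex m) (Γ.vertex (m+1)) ∩
        segment ℝ (Γ.vertex j) (Γ.vertex (j+1)) :=
      ⟨left_mem_segment ℝ _ _, h⟩
    rw [this] at hmem
    have : Γ.vertex m = Γ.vertex j := hmem
    have hd := vertex_eq_dvd Γ this
    -- n ∣ m - j and n ∣ j - (m+1) ⇒ n ∣ 1? m - j + j - m - 1 = -1
    have : (Γ.n : ℤ) ∣ 1 := by
      have := dvd_add hd h3
      have h4 : m - j + (j - (m + 1)) = -1 := by ring
      rw [h4] at this
      exact dvd_neg.1 this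
    have := Int.le_of_dvd one_pos this
    have := Γ.three_le
    omega
  · have hdisj := Γ.nonadj_edges m j h1 h3 (by
      intro h4
      apply h2
      have h5 : j - (m - 1) = -(m - (j+1)) := by ring
      rw [h5]
      exact dvd_neg.2 h4)
    exact (disjoint_left.1 hdisj) (left_mem_segment ℝ _ _) h

/-- A non-vertex point lies on only one edge (mod n). -/
lemma nonvertex_mem_edge {z : Pt} {k j : ℤ} (hk : z ∈ E Γ k) (hj : z ∈ E Γ j)
    (hnv : ∀ i : ℤ, z ≠ Γ.vertex i) : (Γ.n : ℤ) ∣ j - k := by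
  by_contra h1
  by_cases h2 : (Γ.n : ℤ) ∣ j - (k + 1)
  · have := Γ.adj_edges k j h2 h1
    have hmem : z ∈ segment ℝ (Γ.vertex k) (Γ.vertex (k+1)) ∩
        segment ℝ (Γ.vertex j) (Γ.vertex (j+1)) := ⟨hk, hj⟩
    rw [this] at hmem
    exact hnv j hmem
  · by_cases h3 : (Γ.n : ℤ) ∣ k - (j + 1)
    · have := Γ.adj_edges j k h3 (by
        intro h4; exact h1 (by
          have h5 : j - k = -(k - j) := by ring
          rw [h5]; exact dvd_neg.2 h4))
      have hmem : z ∈ segment ℝ (Γ.vertex j) (Γ.vertex (j+1)) ∩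
          segment ℝ (Γ.vertex k) (Γ.vertex (k+1)) := ⟨hj, hk⟩
      rw [this] at hmem
      exact hnv k hmem
    · have hdisj := Γ.nonadj_edges k j h1 h2 h3
      exact (disjoint_left.1 hdisj) hk hj

/-- Near any point, frontier points lie only on edges through that point. -/
lemma loc_radius (z : Pt) :
    ∃ r > 0, ∀ w ∈ ball z r, w ∈ frontier Γ.carrier →
      ∃ j : ℤ, 0 ≤ j ∧ j < Γ.n ∧ z ∈ E Γ j ∧ w ∈ E Γ j := by
  classical
  have hne : (Finset.range Γ.n).Nonempty := ⟨0, by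
    have := Γ.three_le; simp; omega⟩
  set f : ℕ → ℝ := fun j => if z ∈ E Γ j then 1 else infDist z (E Γ j) with hf
  have hfpos : ∀ j ∈ Finset.range Γ.n, 0 < f j := by
    intro j _
    by_cases hzj : z ∈ E Γ j
    · simp [hf, hzj]
    · simp only [hf, hzj, if_false]
      exact ((isClosed_segment' _ _).notMem_iff_infDist_pos
        ⟨_, left_mem_segment ℝ _ _⟩).1 hzj
  set r := (Finset.range Γ.n).inf' hne f with hr
  have hrpos : 0 < r := by
    rw [hr, Finset.lt_inf'_iff]
    intro j hj
    exact hfpos j hj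
  refine ⟨r, hrpos, ?_⟩
  intro w hw hwF
  rcases frontier_mem_edge Γ hwF with ⟨k, hk0, hk1, hwk⟩
  refine ⟨k, hk0, hk1, ?_, hwk⟩
  by_contra hzk
  have hle : r ≤ f k.toNat := by
    apply Finset.inf'_le
    rw [Finset.mem_range]
    omega
  have hkk : (k.toNat : ℤ) = k := by omega
  rw [hf] at hle
  simp only [hkk] at hle
  rw [if_neg hzk] at hle
  have : infDist z (E Γ k) ≤ dist z w := infDist_le_dist_of_mem hwk
  rw [mem_ball, dist_comm] at hw
  linarith

end VisAux
namespace VisAux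

open Metric

variable (Γ : SimplePolygon)

lemma frontier_not_interior {z : Pt} (hz : z ∈ frontier Γ.carrier) :
    z ∉ interior Γ.carrier := by
  exact hz.2

lemma ball_subset_absurd {z : Pt} {r : ℝ} (hr : 0 < r)
    (hz : z ∈ frontier Γ.carrier) (h : ball z r ⊆ Γ.carrier) : False :=
  frontier_not_interior Γ hz (interior_maximal h isOpen_ball (mem_ball_self hr))

/-- Key dichotomy applied through a closure-filling argument: grazing through a straight
piece of wall is impossible. -/
lemma halfplane_absurd {z d : Pt} (g : Pt →ₗ[ℝ] ℝ)
    (hz : z ∈ frontier Γ.carrier) {r : ℝ} (hr : 0 < r)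
    (hF : ∀ w ∈ ball z r, w ∈ frontier Γ.carrier → g (w - z) = 0)
    (hgd : g d ≠ 0) {σ₁ σ₂ : ℝ} (hσ₁ : 0 < σ₁) (hσ₂ : 0 < σ₂)
    (hafter : ∀ s : ℝ, 0 < s → s ≤ σ₁ → z + s • d ∈ Γ.carrier)
    (hbefore : ∀ s : ℝ, 0 < s → s ≤ σ₂ → z - s • d ∈ Γ.carrier) : False := by
  have hd : d ≠ 0 := by rintro rfl; simp at hgd
  have hdn : 0 < ‖d‖ := norm_pos_iff.2 hd
  set s0 : ℝ := min σ₁ (min σ₂ (r / (2 * ‖d‖))) with hs0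
  have hs0pos : 0 < s0 := by
    apply lt_min hσ₁ (lt_min hσ₂ (by positivity))
  have hs0r : s0 * ‖d‖ < r := by
    have h1 : s0 ≤ r / (2 * ‖d‖) := le_trans (min_le_right _ _) (min_le_right _ _)
    have h2 : s0 * ‖d‖ ≤ (r / (2 * ‖d‖)) * ‖d‖ :=
      mul_le_mul_of_nonneg_right h1 (le_of_lt hdn)
    have h3 : (r / (2 * ‖d‖)) * ‖d‖ = r / 2 := by field_simp
    have h4 : r / 2 < r := by linarith
    linarith
  have hmemp : z + s0 • d ∈ Γ.carrier ∩ ball z r := by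
    refine ⟨hafter s0 hs0pos (min_le_left _ _), ?_⟩
    rw [mem_ball, dist_eq_norm]
    simpa [norm_smul, abs_of_pos hs0pos] using hs0r
  have hmemm : z - s0 • d ∈ Γ.carrier ∩ ball z r := by
    refine ⟨hbefore s0 hs0pos (le_trans (min_le_right _ _) (min_le_left _ _)), ?_⟩
    rw [mem_ball, dist_eq_norm]
    have : z - s0 • d - z = -(s0 • d) := by abel
    rw [this, norm_neg]
    simpa [norm_smul, abs_of_pos hs0pos] using hs0r
  -- the two open half-balls
  set Hp : Set Pt := ball z r ∩ {w | 0 < g (w - z)} with hHp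
  set Hm : Set Pt := ball z r ∩ {w | g (w - z) < 0} with hHm
  have hconvp : Convex ℝ Hp := by
    apply (convex_ball z r).inter
    have : {w : Pt | 0 < g (w - z)} = {w | g z < g w} := by
      ext w; simp [map_sub, sub_pos]
    rw [this]
    exact convex_halfSpace_gt (LinearMap.isLinear g) _
  have hconvm : Convex ℝ Hm := by
    apply (convex_ball z r).inter
    have : {w : Pt | g (w - z) < 0} = {w | g w < g z} := by
      ext w; simp [map_sub, sub_neg]
    rw [this]
    exact convex_halfSpace_lt (LinearMap.isLinear g) _
  have havoidp : ∀ y ∈ Hp, y ∉ frontier Γ.carrier := by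
    rintro y ⟨hy1, hy2⟩ hyF
    simp only [mem_setOf_eq] at hy2
    rw [hF y hy1 hyF] at hy2; exact lt_irrefl 0 hy2
  have havoidm : ∀ y ∈ Hm, y ∉ frontier Γ.carrier := by
    rintro y ⟨hy1, hy2⟩ hyF
    simp only [mem_setOf_eq] at hy2
    rw [hF y hy1 hyF] at hy2; exact lt_irrefl 0 hy2
  -- membership of the two carrier points, by sign of g d
  have hgp : g (z + s0 • d - z) = s0 * g d := by
    rw [add_sub_cancel_left, map_smul]; rfl
  have hgm : g (z - s0 • d - z) = -(s0 * g d) := by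
    have : z - s0 • d - z = -(s0 • d) := by abel
    rw [this, map_neg, map_smul]; rfl
  have hsub : ∀ w ∈ ball z r, w ∈ Γ.carrier := by
    have hPQ : Hp ⊆ interior Γ.carrier ∧ Hm ⊆ interior Γ.carrier := by
      rcases lt_or_gt_of_ne hgd with hneg | hpos
      · constructor
        · exact convex_subset_interior hconvp havoidp
            (p := z - s0 • d) ⟨hmemm.2, by rw [mem_setOf_eq, hgm]; nlinarith⟩ hmemm.1
        · exact convex_subset_interior hconvm havoidm
            (p := z + s0 • d) ⟨hmemp.2, by rw [mem_setOf_eq, hgp]; nlinarith⟩ hmemp.1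
      · constructor
        · exact convex_subset_interior hconvp havoidp
            (p := z + s0 • d) ⟨hmemp.2, by rw [mem_setOf_eq, hgp]; nlinarith⟩ hmemp.1
        · exact convex_subset_interior hconvm havoidm
            (p := z - s0 • d) ⟨hmemm.2, by rw [mem_setOf_eq, hgm]; nlinarith⟩ hmemm.1
    intro w hw
    rcases lt_trichotomy (g (w - z)) 0 with h | h | h
    · exact interior_subset (hPQ.2 ⟨hw, h⟩)
    · -- on the line : approximate from the side
      have hcl : w ∈ closure Γ.carrier := by
        rw [Metric.mem_closure_iff]
        intro ε hε
        have hwr : dist w z < r := mem_ball.1 hw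
        set ε' : ℝ := min (ε / (2 * ‖d‖)) ((r - dist w z) / (2 * ‖d‖)) with hε'
        have hδpos : 0 < r - dist w z := by linarith
        have hε'pos : 0 < ε' :=
          lt_min (div_pos hε (by positivity)) (div_pos hδpos (by positivity))
        refine ⟨w + ε' • d, ?_, ?_⟩
        · have hball : w + ε' • d ∈ ball z r := by
            rw [mem_ball]
            calc dist (w + ε' • d) z ≤ dist (w + ε' • d) w + dist w z := dist_triangle _ _ _
              _ < (r - dist w z) + dist w z := by
                  apply add_lt_add_left
                  rw [dist_eq_norm, add_sub_cancel_left, norm_smul,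
                    Real.norm_eq_abs, abs_of_pos hε'pos]
                  calc ε' * ‖d‖ ≤ ((r - dist w z) / (2 * ‖d‖)) * ‖d‖ := by
                        apply mul_le_mul_of_nonneg_right (min_le_right _ _) (le_of_lt hdn)
                    _ = (r - dist w z) / 2 := by field_simp
                    _ < r - dist w z := by
                        have : 0 < r - dist w z := by linarith
                        linarith
              _ = r := by ring
          have hg' : g (w + ε' • d - z) = ε' * g d := by
            have : w + ε' • d - z = (w - z) + ε' • d := by abel
            rw [this, map_add, h, map_smul, zero_add]; rfl
          rcases lt_or_gt_of_ne hgd with hneg | hpos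
          · exact interior_subset (hPQ.2 ⟨hball, by rw [mem_setOf_eq, hg']; nlinarith⟩)
          · exact interior_subset (hPQ.1 ⟨hball, by rw [mem_setOf_eq, hg']; nlinarith⟩)
        · rw [dist_comm, dist_eq_norm, add_sub_cancel_left, norm_smul,
            Real.norm_eq_abs, abs_of_pos hε'pos]
          calc ε' * ‖d‖ ≤ (ε / (2 * ‖d‖)) * ‖d‖ := by
                apply mul_le_mul_of_nonneg_right (min_le_left _ _) (le_of_lt hdn)
            _ = ε / 2 := by field_simp
            _ < ε := by linarith
      rwa [Γ.compact.isClosed.closure_eq] at hcl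
    · exact interior_subset (hPQ.1 ⟨hw, h⟩)
  exact ball_subset_absurd Γ hr hz hsub

end VisAux
namespace VisAux

open Metric

variable (Γ : SimplePolygon)

section Quad

variable {v d u₁ u₂ : Pt} {r σ₁ σ₂ : ℝ}

/-- Coordinates with respect to the (independent) wall directions. -/
lemma span_coords (hD : cross u₁ u₂ ≠ 0) (w : Pt) :
    w = (mkLin (u₂ 1 / cross u₁ u₂) (-(u₂ 0) / cross u₁ u₂) w) • u₁ +
        (mkLin (-(u₁ 1) / cross u₁ u₂) (u₁ 0 / cross u₁ u₂) w) • u₂ := by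
  apply pt_ext
  · rw [add_apply', smul_apply', smul_apply', mkLin_apply, mkLin_apply]
    unfold cross at hD ⊢
    simp only [div_eq_mul_inv]
    have hinv := mul_inv_cancel₀ hD
    linear_combination (-(w 0 + w 1) + w 1) * hinv
  · rw [add_apply', smul_apply', smul_apply', mkLin_apply, mkLin_apply]
    unfold cross at hD ⊢
    simp only [div_eq_mul_inv]
    have hinv := mul_inv_cancel₀ hD
    linear_combination (-(w 1)) * hinv

lemma coord_u (hD : cross u₁ u₂ ≠ 0) :
    mkLin (u₂ 1 / cross u₁ u₂) (-(u₂ 0) / cross u₁ u₂) u₁ = 1 ∧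
    mkLin (u₂ 1 / cross u₁ u₂) (-(u₂ 0) / cross u₁ u₂) u₂ = 0 ∧
    mkLin (-(u₁ 1) / cross u₁ u₂) (u₁ 0 / cross u₁ u₂) u₁ = 0 ∧
    mkLin (-(u₁ 1) / cross u₁ u₂) (u₁ 0 / cross u₁ u₂) u₂ = 1 := by
  unfold cross at hD
  refine ⟨?_, ?_, ?_, ?_⟩ <;>
  · rw [mkLin_apply]
    unfold cross
    field_simp
    first
    | ring1
    | (have h' : u₂ 1 * u₁ 0 - u₁ 1 * u₂ 0 ≠ 0 := by intro h; apply hD; linarith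
       linear_combination mul_inv_cancel₀ h')

set_option maxHeartbeats 2000000 in
/-- The full quadrant analysis at a grazed reflex corner. -/
lemma quad_analysis (hD : cross u₁ u₂ ≠ 0) (hd : d ≠ 0)
    (hv : v ∈ frontier Γ.carrier) (hr : 0 < r)
    (hF : ∀ w ∈ ball v r, w ∈ frontier Γ.carrier →
      ∃ s : ℝ, 0 ≤ s ∧ (w = v + s • u₁ ∨ w = v + s • u₂))
    (hσ₁ : 0 < σ₁) (hσ₂ : 0 < σ₂)
    (hafter : ∀ s : ℝ, 0 < s → s ≤ σ₁ → v + s • d ∈ Γ.carrier)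
    (hbefore : ∀ s : ℝ, 0 < s → s ≤ σ₂ → v - s • d ∈ Γ.carrier)
    (hnd1 : ∀ c : ℝ, 0 < c → u₁ ≠ c • d) (hnd2 : ∀ c : ℝ, 0 < c → u₂ ≠ c • d) :
    let A := mkLin (u₂ 1 / cross u₁ u₂) (-(u₂ 0) / cross u₁ u₂)
    let B := mkLin (-(u₁ 1) / cross u₁ u₂) (u₁ 0 / cross u₁ u₂)
    ¬(0 < A d ∧ 0 < B d) ∧ ¬(A d < 0 ∧ B d < 0) ∧
      (∀ w ∈ ball v r, 0 < A (w - v) → 0 < B (w - v) → w ∉ Γ.carrier) := by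
  intro A B
  obtain ⟨hAu₁, hAu₂, hBu₁, hBu₂⟩ := coord_u hD
  set α := A d with hα
  set β := B d with hβ
  have hαβ : ¬(α = 0 ∧ β = 0) := by
    rintro ⟨h1, h2⟩
    apply hd
    have := span_coords hD d
    rw [← hα, ← hβ] at this
    rw [h1, h2] at this
    simpa using this
  -- the three convex regions
  set Q : Set Pt := ball v r ∩ ({w | 0 < A (w - v)} ∩ {w | 0 < B (w - v)}) with hQ
  set Q' : Set Pt := ball v r ∩ {w | A (w - v) < 0} with hQ'
  set Q'' : Set Pt := ball v r ∩ {w | B (w - v) < 0} with hQ''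
  have hconvhalf : ∀ (L : Pt →ₗ[ℝ] ℝ), Convex ℝ {w : Pt | 0 < L (w - v)} := by
    intro L
    have : {w : Pt | 0 < L (w - v)} = {w | L v < L w} := by
      ext w; simp [map_sub, sub_pos]
    rw [this]; exact convex_halfSpace_gt (LinearMap.isLinear L) _
  have hconvhalf' : ∀ (L : Pt →ₗ[ℝ] ℝ), Convex ℝ {w : Pt | L (w - v) < 0} := by
    intro L
    have : {w : Pt | L (w - v) < 0} = {w | L w < L v} := by
      ext w; simp [map_sub, sub_neg]
    rw [this]; exact convex_halfSpace_lt (LinearMap.isLinear L) _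
  have hconvQ : Convex ℝ Q := (convex_ball v r).inter ((hconvhalf A).inter (hconvhalf B))
  have hconvQ' : Convex ℝ Q' := (convex_ball v r).inter (hconvhalf' A)
  have hconvQ'' : Convex ℝ Q'' := (convex_ball v r).inter (hconvhalf' B)
  -- coordinates of points on the walls
  have hcoordray : ∀ w ∈ ball v r, w ∈ frontier Γ.carrier →
      (0 ≤ A (w - v) ∧ B (w - v) = 0) ∨ (A (w - v) = 0 ∧ 0 ≤ B (w - v)) := by
    intro w hw hwF
    rcases hF w hw hwF with ⟨s, hs, h | h⟩
    · left
      have : w - v = s • u₁ := by rw [h]; abel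
      rw [this, map_smul, map_smul, hAu₁, hBu₁]
      constructor
      · simpa using hs
      · simp
    · right
      have : w - v = s • u₂ := by rw [h]; abel
      rw [this, map_smul, map_smul, hAu₂, hBu₂]
      constructor
      · simp
      · simpa using hs
  have havoidQ : ∀ y ∈ Q, y ∉ frontier Γ.carrier := by
    rintro y ⟨hy1, hy2, hy3⟩ hyF
    simp only [mem_setOf_eq] at hy2 hy3
    rcases hcoordray y hy1 hyF with ⟨_, h⟩ | ⟨h, _⟩ <;> [exact absurd h (by linarith); exact absurd h (by linarith)]
  have havoidQ' : ∀ y ∈ Q', y ∉ frontier Γ.carrier := by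
    rintro y ⟨hy1, hy2⟩ hyF
    simp only [mem_setOf_eq] at hy2
    rcases hcoordray y hy1 hyF with ⟨h, _⟩ | ⟨h, _⟩ <;> linarith
  have havoidQ'' : ∀ y ∈ Q'', y ∉ frontier Γ.carrier := by
    rintro y ⟨hy1, hy2⟩ hyF
    simp only [mem_setOf_eq] at hy2
    rcases hcoordray y hy1 hyF with ⟨_, h⟩ | ⟨_, h⟩ <;> linarith
  -- the two probe points
  have hdn : 0 < ‖d‖ := norm_pos_iff.2 hd
  set s0 : ℝ := min σ₁ (min σ₂ (r / (2 * ‖d‖))) with hs0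
  have hs0pos : 0 < s0 := lt_min hσ₁ (lt_min hσ₂ (by positivity))
  have hs0r : s0 * ‖d‖ < r := by
    have h1 : s0 ≤ r / (2 * ‖d‖) := le_trans (min_le_right _ _) (min_le_right _ _)
    have h2 : s0 * ‖d‖ ≤ (r / (2 * ‖d‖)) * ‖d‖ := mul_le_mul_of_nonneg_right h1 (le_of_lt hdn)
    have h3 : (r / (2 * ‖d‖)) * ‖d‖ = r / 2 := by field_simp
    linarith
  have hmemp : v + s0 • d ∈ Γ.carrier ∩ ball v r := by
    refine ⟨hafter s0 hs0pos (min_le_left _ _), ?_⟩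
    rw [mem_ball, dist_eq_norm]
    simpa [norm_smul, abs_of_pos hs0pos] using hs0r
  have hmemm : v - s0 • d ∈ Γ.carrier ∩ ball v r := by
    refine ⟨hbefore s0 hs0pos (le_trans (min_le_right _ _) (min_le_left _ _)), ?_⟩
    rw [mem_ball, dist_eq_norm]
    have h5 : v - s0 • d - v = -(s0 • d) := by abel
    rw [h5, norm_neg]
    simpa [norm_smul, abs_of_pos hs0pos] using hs0r
  have hcoordp : A (v + s0 • d - v) = s0 * α ∧ B (v + s0 • d - v) = s0 * β := by
    rw [add_sub_cancel_left, map_smul, map_smul]; exact ⟨rfl, rfl⟩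
  have hcoordm : A (v - s0 • d - v) = -(s0 * α) ∧ B (v - s0 • d - v) = -(s0 * β) := by
    have h5 : v - s0 • d - v = -(s0 • d) := by abel
    rw [h5, map_neg, map_neg, map_smul, map_smul]
    exact ⟨rfl, rfl⟩
  -- the "not all three interior" principle
  have hnotall : Q ⊆ interior Γ.carrier → Q' ⊆ interior Γ.carrier →
      Q'' ⊆ interior Γ.carrier → False := by
    intro h1 h2 h3
    apply ball_subset_absurd Γ hr hv
    intro w hw
    set α' := A (w - v) with hα'
    set β' := B (w - v) with hβ'
    rcases lt_trichotomy α' 0 with hc | hc | hc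
    · exact interior_subset (h2 ⟨hw, hc⟩)
    · -- α' = 0 : approximate from Q' by moving along -u₁
      have hu₁ : u₁ ≠ 0 := by
        intro h; rw [h] at hD; unfold cross at hD; simp at hD
      have hun : 0 < ‖u₁‖ := norm_pos_iff.2 hu₁
      have hcl : w ∈ closure Γ.carrier := by
        rw [Metric.mem_closure_iff]
        intro ε hε
        have hwr : dist w v < r := mem_ball.1 hw
        have hδpos : 0 < r - dist w v := by linarith
        set ε' : ℝ := min (ε / (2 * ‖u₁‖)) ((r - dist w v) / (2 * ‖u₁‖)) with hε'
        have hε'pos : 0 < ε' :=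
          lt_min (div_pos hε (by positivity)) (div_pos hδpos (by positivity))
        have hε'n : ε' * ‖u₁‖ < min ε (r - dist w v) := by
          have k1 : ε' * ‖u₁‖ ≤ (ε / (2 * ‖u₁‖)) * ‖u₁‖ :=
            mul_le_mul_of_nonneg_right (min_le_left _ _) (le_of_lt hun)
          have k2 : ε' * ‖u₁‖ ≤ ((r - dist w v) / (2 * ‖u₁‖)) * ‖u₁‖ :=
            mul_le_mul_of_nonneg_right (min_le_right _ _) (le_of_lt hun)
          have k3 : (ε / (2 * ‖u₁‖)) * ‖u₁‖ = ε / 2 := by field_simp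
          have k4 : ((r - dist w v) / (2 * ‖u₁‖)) * ‖u₁‖ = (r - dist w v) / 2 := by
            field_simp
          apply lt_min <;> [linarith; linarith]
        refine ⟨w - ε' • u₁, ?_, ?_⟩
        · refine interior_subset (h2 ⟨?_, ?_⟩)
          · rw [mem_ball]
            calc dist (w - ε' • u₁) v ≤ dist (w - ε' • u₁) w + dist w v := dist_triangle _ _ _
              _ < (r - dist w v) + dist w v := by
                  apply add_lt_add_left
                  rw [dist_eq_norm]
                  have h6 : w - ε' • u₁ - w = -(ε' • u₁) := by abel
                  rw [h6, norm_neg, norm_smul, Real.norm_eq_abs, abs_of_pos hε'pos]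
                  exact lt_of_lt_of_le hε'n (min_le_right _ _)
              _ = r := by ring
          · simp only [mem_setOf_eq]
            have h6 : w - ε' • u₁ - v = (w - v) - ε' • u₁ := by abel
            rw [h6, map_sub, map_smul, ← hα', hc, hAu₁]
            simpa using hε'pos
        · rw [dist_comm, dist_eq_norm]
          have h6 : w - ε' • u₁ - w = -(ε' • u₁) := by abel
          rw [h6, norm_neg, norm_smul, Real.norm_eq_abs, abs_of_pos hε'pos]
          exact lt_of_lt_of_le hε'n (min_le_left _ _)
      rwa [Γ.compact.isClosed.closure_eq] at hcl
    · rcases lt_trichotomy β' 0 with hc2 | hc2 | hc2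
      · exact interior_subset (h3 ⟨hw, hc2⟩)
      · -- β' = 0, α' > 0 : approximate from Q'' by moving along -u₂
        have hu₂ : u₂ ≠ 0 := by
          intro h; rw [h] at hD; unfold cross at hD; simp at hD
        have hun : 0 < ‖u₂‖ := norm_pos_iff.2 hu₂
        have hcl : w ∈ closure Γ.carrier := by
          rw [Metric.mem_closure_iff]
          intro ε hε
          have hwr : dist w v < r := mem_ball.1 hw
          have hδpos : 0 < r - dist w v := by linarith
          set ε' : ℝ := min (ε / (2 * ‖u₂‖)) ((r - dist w v) / (2 * ‖u₂‖)) with hε'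
          have hε'pos : 0 < ε' :=
            lt_min (div_pos hε (by positivity)) (div_pos hδpos (by positivity))
          have hε'n : ε' * ‖u₂‖ < min ε (r - dist w v) := by
            have k1 : ε' * ‖u₂‖ ≤ (ε / (2 * ‖u₂‖)) * ‖u₂‖ :=
              mul_le_mul_of_nonneg_right (min_le_left _ _) (le_of_lt hun)
            have k2 : ε' * ‖u₂‖ ≤ ((r - dist w v) / (2 * ‖u₂‖)) * ‖u₂‖ :=
              mul_le_mul_of_nonneg_right (min_le_right _ _) (le_of_lt hun)
            have k3 : (ε / (2 * ‖u₂‖)) * ‖u₂‖ = ε / 2 := by field_simp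
            have k4 : ((r - dist w v) / (2 * ‖u₂‖)) * ‖u₂‖ = (r - dist w v) / 2 := by
              field_simp
            apply lt_min <;> [linarith; linarith]
          refine ⟨w - ε' • u₂, ?_, ?_⟩
          · refine interior_subset (h3 ⟨?_, ?_⟩)
            · rw [mem_ball]
              calc dist (w - ε' • u₂) v ≤ dist (w - ε' • u₂) w + dist w v :=
                    dist_triangle _ _ _
                _ < (r - dist w v) + dist w v := by
                    apply add_lt_add_left
                    rw [dist_eq_norm]
                    have h6 : w - ε' • u₂ - w = -(ε' • u₂) := by abel
                    rw [h6, norm_neg, norm_smul, Real.norm_eq_abs, abs_of_pos hε'pos]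
                    exact lt_of_lt_of_le hε'n (min_le_right _ _)
                _ = r := by ring
            · simp only [mem_setOf_eq]
              have h6 : w - ε' • u₂ - v = (w - v) - ε' • u₂ := by abel
              rw [h6, map_sub, map_smul, ← hβ', hc2, hBu₂]
              simpa using hε'pos
          · rw [dist_comm, dist_eq_norm]
            have h6 : w - ε' • u₂ - w = -(ε' • u₂) := by abel
            rw [h6, norm_neg, norm_smul, Real.norm_eq_abs, abs_of_pos hε'pos]
            exact lt_of_lt_of_le hε'n (min_le_left _ _)
        rwa [Γ.compact.isClosed.closure_eq] at hcl
      · exact interior_subset (h1 ⟨hw, by exact hc, by exact hc2⟩)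
  -- now the three conclusions
  have hC1 : ¬(0 < α ∧ 0 < β) := by
    rintro ⟨h1, h2⟩
    have hQint : Q ⊆ interior Γ.carrier := by
      apply convex_subset_interior hconvQ havoidQ (p := v + s0 • d)
        ⟨hmemp.2, by simp only [mem_setOf_eq]; rw [hcoordp.1]; positivity,
         by simp only [mem_setOf_eq]; rw [hcoordp.2]; positivity⟩ hmemp.1
    have hQ'int : Q' ⊆ interior Γ.carrier := by
      apply convex_subset_interior hconvQ' havoidQ' (p := v - s0 • d)
        ⟨hmemm.2, by simp only [mem_setOf_eq]; rw [hcoordm.1]; nlinarith⟩ hmemm.1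
    have hQ''int : Q'' ⊆ interior Γ.carrier := by
      apply convex_subset_interior hconvQ'' havoidQ'' (p := v - s0 • d)
        ⟨hmemm.2, by simp only [mem_setOf_eq]; rw [hcoordm.2]; nlinarith⟩ hmemm.1
    exact hnotall hQint hQ'int hQ''int
  have hC2 : ¬(α < 0 ∧ β < 0) := by
    rintro ⟨h1, h2⟩
    have hQint : Q ⊆ interior Γ.carrier := by
      apply convex_subset_interior hconvQ havoidQ (p := v - s0 • d)
        ⟨hmemm.2, by simp only [mem_setOf_eq]; rw [hcoordm.1]; nlinarith,
         by simp only [mem_setOf_eq]; rw [hcoordm.2]; nlinarith⟩ hmemm.1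
    have hQ'int : Q' ⊆ interior Γ.carrier := by
      apply convex_subset_interior hconvQ' havoidQ' (p := v + s0 • d)
        ⟨hmemp.2, by simp only [mem_setOf_eq]; rw [hcoordp.1]; nlinarith⟩ hmemp.1
    have hQ''int : Q'' ⊆ interior Γ.carrier := by
      apply convex_subset_interior hconvQ'' havoidQ'' (p := v + s0 • d)
        ⟨hmemp.2, by simp only [mem_setOf_eq]; rw [hcoordp.2]; nlinarith⟩ hmemp.1
    exact hnotall hQint hQ'int hQ''int
  refine ⟨hC1, hC2, ?_⟩
  -- first show α < 0 ∨ β < 0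
  have hneg : α < 0 ∨ β < 0 := by
    by_contra hcon
    push_neg at hcon
    obtain ⟨h1, h2⟩ := hcon
    rcases lt_or_eq_of_le h1 with h1' | h1'
    · rcases lt_or_eq_of_le h2 with h2' | h2'
      · exact hC1 ⟨h1', h2'⟩
      · -- β = 0, α > 0 : d is a positive multiple of u₁
        apply hnd1 (1/α) (by positivity)
        have hspan := span_coords hD d
        rw [← hα, ← hβ, ← h2', zero_smul, add_zero] at hspan
        rw [hspan, smul_smul]
        rw [one_div, inv_mul_cancel₀ (ne_of_gt h1'), one_smul]
    · -- α = 0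
      rcases lt_or_eq_of_le h2 with h2' | h2'
      · apply hnd2 (1/β) (by positivity)
        have hspan := span_coords hD d
        rw [← hα, ← hβ, ← h1', zero_smul, zero_add] at hspan
        rw [hspan, smul_smul]
        rw [one_div, inv_mul_cancel₀ (ne_of_gt h2'), one_smul]
      · exact hαβ ⟨h1'.symm, h2'.symm⟩
  -- hence Q' and Q'' are both contained in the interior
  have hQ'Q'' : Q' ⊆ interior Γ.carrier ∧ Q'' ⊆ interior Γ.carrier := by
    have hlinked : (Q' ⊆ interior Γ.carrier) → (Q'' ⊆ interior Γ.carrier) := by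
      intro h2
      -- a common point of Q' and Q''
      have hu : ∃ p, p ∈ Q' ∩ Q'' := by
        set ν : ℝ := r / (2 * (‖u₁‖ + ‖u₂‖ + 1)) with hν
        have hνpos : 0 < ν := by positivity
        refine ⟨v - ν • (u₁ + u₂), ⟨?_, ?_⟩, ⟨?_, ?_⟩⟩
        · rw [mem_ball, dist_eq_norm]
          have h6 : v - ν • (u₁ + u₂) - v = -(ν • (u₁ + u₂)) := by abel
          rw [h6, norm_neg, norm_smul, Real.norm_eq_abs, abs_of_pos hνpos]
          have : ‖u₁ + u₂‖ ≤ ‖u₁‖ + ‖u₂‖ := norm_add_le _ _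
          have h7 : ν * (‖u₁‖ + ‖u₂‖ + 1) = r / 2 := by rw [hν]; field_simp
          nlinarith [norm_nonneg (u₁ + u₂)]
        · simp only [mem_setOf_eq]
          have h6 : v - ν • (u₁ + u₂) - v = -(ν • (u₁ + u₂)) := by abel
          rw [h6, map_neg, map_smul, map_add, hAu₁, hAu₂]
          simp only [smul_eq_mul]
          nlinarith
        · rw [mem_ball, dist_eq_norm]
          have h6 : v - ν • (u₁ + u₂) - v = -(ν • (u₁ + u₂)) := by abel
          rw [h6, norm_neg, norm_smul, Real.norm_eq_abs, abs_of_pos hνpos]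
          have : ‖u₁ + u₂‖ ≤ ‖u₁‖ + ‖u₂‖ := norm_add_le _ _
          have h7 : ν * (‖u₁‖ + ‖u₂‖ + 1) = r / 2 := by rw [hν]; field_simp
          nlinarith [norm_nonneg (u₁ + u₂)]
        · simp only [mem_setOf_eq]
          have h6 : v - ν • (u₁ + u₂) - v = -(ν • (u₁ + u₂)) := by abel
          rw [h6, map_neg, map_smul, map_add, hBu₁, hBu₂]
          simp only [smul_eq_mul]
          nlinarith
      obtain ⟨p, hp', hp''⟩ := hu
      exact convex_subset_interior hconvQ'' havoidQ'' hp''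
        (interior_subset (h2 hp'))
    have hlinked' : (Q'' ⊆ interior Γ.carrier) → (Q' ⊆ interior Γ.carrier) := by
      intro h2
      have hu : ∃ p, p ∈ Q' ∩ Q'' := by
        set ν : ℝ := r / (2 * (‖u₁‖ + ‖u₂‖ + 1)) with hν
        have hνpos : 0 < ν := by positivity
        refine ⟨v - ν • (u₁ + u₂), ⟨?_, ?_⟩, ⟨?_, ?_⟩⟩
        · rw [mem_ball, dist_eq_norm]
          have h6 : v - ν • (u₁ + u₂) - v = -(ν • (u₁ + u₂)) := by abel
          rw [h6, norm_neg, norm_smul, Real.norm_eq_abs, abs_of_pos hνpos]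
          have : ‖u₁ + u₂‖ ≤ ‖u₁‖ + ‖u₂‖ := norm_add_le _ _
          have h7 : ν * (‖u₁‖ + ‖u₂‖ + 1) = r / 2 := by rw [hν]; field_simp
          nlinarith [norm_nonneg (u₁ + u₂)]
        · simp only [mem_setOf_eq]
          have h6 : v - ν • (u₁ + u₂) - v = -(ν • (u₁ + u₂)) := by abel
          rw [h6, map_neg, map_smul, map_add, hAu₁, hAu₂]
          simp only [smul_eq_mul]
          nlinarith
        · rw [mem_ball, dist_eq_norm]
          have h6 : v - ν • (u₁ + u₂) - v = -(ν • (u₁ + u₂)) := by abel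
          rw [h6, norm_neg, norm_smul, Real.norm_eq_abs, abs_of_pos hνpos]
          have : ‖u₁ + u₂‖ ≤ ‖u₁‖ + ‖u₂‖ := norm_add_le _ _
          have h7 : ν * (‖u₁‖ + ‖u₂‖ + 1) = r / 2 := by rw [hν]; field_simp
          nlinarith [norm_nonneg (u₁ + u₂)]
        · simp only [mem_setOf_eq]
          have h6 : v - ν • (u₁ + u₂) - v = -(ν • (u₁ + u₂)) := by abel
          rw [h6, map_neg, map_smul, map_add, hBu₁, hBu₂]
          simp only [smul_eq_mul]
          nlinarith
      obtain ⟨p, hp', hp''⟩ := hu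
      exact convex_subset_interior hconvQ' havoidQ' hp'
        (interior_subset (h2 hp''))
    rcases hneg with h | h
    · have hQ'int : Q' ⊆ interior Γ.carrier := by
        apply convex_subset_interior hconvQ' havoidQ' (p := v + s0 • d)
          ⟨hmemp.2, by simp only [mem_setOf_eq]; rw [hcoordp.1]; nlinarith⟩ hmemp.1
      exact ⟨hQ'int, hlinked hQ'int⟩
    · have hQ''int : Q'' ⊆ interior Γ.carrier := by
        apply convex_subset_interior hconvQ'' havoidQ'' (p := v + s0 • d)
          ⟨hmemp.2, by simp only [mem_setOf_eq]; rw [hcoordp.2]; nlinarith⟩ hmemp.1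
      exact ⟨hlinked' hQ''int, hQ''int⟩
  -- finally : the open quadrant misses the carrier
  intro w hw hA hB hwC
  have hQint : Q ⊆ interior Γ.carrier :=
    convex_subset_interior hconvQ havoidQ
      (p := w) ⟨hw, by exact hA, by exact hB⟩ hwC
  exact hnotall hQint hQ'Q''.1 hQ'Q''.2

end Quad

end VisAux
namespace VisAux

open Metric

variable (Γ : SimplePolygon)

/-- Local structure of the frontier at any of its points: within a small ball the frontier
consists of (at most) two rays, and initial portions of these rays consist of wall points. -/
lemma frontier_local {z : Pt} (hz : z ∈ frontier Γ.carrier) :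
    ∃ e₁ e₂ : Pt, e₁ ≠ 0 ∧ e₂ ≠ 0 ∧ ∃ r : ℝ, 0 < r ∧ ∃ ℓ : ℝ, 0 < ℓ ∧
      (∀ w ∈ ball z r, w ∈ frontier Γ.carrier →
        ∃ s : ℝ, 0 ≤ s ∧ (w = z + s • e₁ ∨ w = z + s • e₂)) ∧
      (∀ s : ℝ, 0 < s → s ≤ ℓ → z + s • e₁ ∈ frontier Γ.carrier) ∧
      (∀ s : ℝ, 0 < s → s ≤ ℓ → z + s • e₂ ∈ frontier Γ.carrier) := by
  obtain ⟨r, hr, hloc⟩ := loc_radius Γ z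
  by_cases hv : ∃ i : ℤ, z = Γ.vertex i
  · obtain ⟨i, rfl⟩ := hv
    refine ⟨Γ.vertex (i - 1) - Γ.vertex i, Γ.vertex (i + 1) - Γ.vertex i, ?_, ?_,
      r, hr, 1, one_pos, ?_, ?_, ?_⟩
    · rw [sub_ne_zero]
      intro h
      have h2 := vertex_ne_succ Γ (i - 1)
      rw [sub_add_cancel] at h2
      exact h2 h
    · rw [sub_ne_zero]
      exact fun h => vertex_ne_succ Γ i h.symm
    · intro w hw hwF
      obtain ⟨j, _, _, hzj, hwj⟩ := hloc w hw hwF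
      rcases vertex_mem_edge Γ hzj with hadj | hadj
      · -- E j = E i
        rw [edge_congr Γ hadj] at hwj
        rcases mem_segment_param.1 hwj with ⟨s, hs0, _, rfl⟩
        exact ⟨s, hs0, Or.inr rfl⟩
      · -- E j = E (i-1)
        rw [edge_congr Γ hadj] at hwj
        unfold E at hwj
        rw [sub_add_cancel] at hwj
        rw [segment_symm] at hwj
        rcases mem_segment_param.1 hwj with ⟨s, hs0, _, rfl⟩
        exact ⟨s, hs0, Or.inl rfl⟩
    · intro s hs0 hs1
      apply edge_subset_frontier Γ (i - 1)
      unfold E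
      rw [sub_add_cancel, segment_symm]
      exact param_mem_segment (le_of_lt hs0) hs1
    · intro s hs0 hs1
      apply edge_subset_frontier Γ i
      exact param_mem_segment (le_of_lt hs0) hs1
  · push_neg at hv
    obtain ⟨k, _, _, hzk⟩ := frontier_mem_edge Γ hz
    rcases mem_segment_param.1 hzk with ⟨lam, hl0, hl1, hzeq⟩
    have hlam0 : 0 < lam := by
      rcases lt_or_eq_of_le hl0 with h | h
      · exact h
      · exfalso; apply hv k; rw [hzeq, ← h, zero_smul, add_zero]
    have hlam1 : lam < 1 := by
      rcases lt_or_eq_of_le hl1 with h | h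
      · exact h
      · exfalso; apply hv (k + 1)
        rw [hzeq, h, one_smul]
        abel
    refine ⟨Γ.vertex (k + 1) - Γ.vertex k, Γ.vertex k - Γ.vertex (k + 1), ?_, ?_,
      r, hr, min lam (1 - lam), lt_min hlam0 (by linarith), ?_, ?_, ?_⟩
    · rw [sub_ne_zero]; exact fun h => vertex_ne_succ Γ k h.symm
    · rw [sub_ne_zero]; exact vertex_ne_succ Γ k
    · intro w hw hwF
      obtain ⟨j, _, _, hzj, hwj⟩ := hloc w hw hwF
      have hjk := nonvertex_mem_edge Γ hzk hzj (fun i h => hv i h)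
      rw [edge_congr Γ hjk] at hwj
      rcases mem_segment_param.1 hwj with ⟨mu, hm0, hm1, rfl⟩
      rcases le_or_gt lam mu with hcmp | hcmp
      · refine ⟨mu - lam, by linarith, Or.inl ?_⟩
        rw [hzeq]
        rw [smul_sub, smul_sub, smul_sub]
        module
      · refine ⟨lam - mu, by linarith, Or.inr ?_⟩
        rw [hzeq]
        rw [smul_sub, smul_sub, smul_sub]
        module
    · intro s hs0 hs1
      apply edge_subset_frontier Γ k
      have : z + s • (Γ.vertex (k + 1) - Γ.vertex k) =
          Γ.vertex k + (lam + s) • (Γ.vertex (k + 1) - Γ.vertex k) := by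
        rw [hzeq]; module
      rw [this]
      exact param_mem_segment (by linarith)
        (by have := le_trans hs1 (min_le_right lam (1 - lam)); linarith)
    · intro s hs0 hs1
      apply edge_subset_frontier Γ k
      have : z + s • (Γ.vertex k - Γ.vertex (k + 1)) =
          Γ.vertex k + (lam - s) • (Γ.vertex (k + 1) - Γ.vertex k) := by
        rw [hzeq]; module
      rw [this]
      exact param_mem_segment
        (by have := le_trans hs1 (min_le_left lam (1 - lam)); linarith)
        (by linarith)

end VisAux
namespace VisAux

open Metric

variable (Γ : SimplePolygon)

/-- A cross-product linear functional. -/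
def crossLin (u : Pt) : Pt →ₗ[ℝ] ℝ := mkLin (-(u 1)) (u 0)

lemma crossLin_apply (u w : Pt) : crossLin u w = cross u w := by
  rw [crossLin, mkLin_apply]; unfold cross; ring

/-- An inner-product linear functional. -/
def innerLin (u : Pt) : Pt →ₗ[ℝ] ℝ := mkLin (u 0) (u 1)

lemma innerLin_self_pos {u : Pt} (hu : u ≠ 0) : 0 < innerLin u u := by
  rw [innerLin, mkLin_apply]
  rcases (not_and_or.1 (fun h => hu ((eq_zero_iff u).2 h))) with h | h
  · have h0 : 0 < u 0 * u 0 := mul_self_pos.2 h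
    nlinarith [mul_self_nonneg (u 1)]
  · have h0 : 0 < u 1 * u 1 := mul_self_pos.2 h
    nlinarith [mul_self_nonneg (u 0)]

/-- Construction of a half-plane functional positive on `d` and nonpositive on `e`. -/
lemma cone_functional {e d : Pt} (he : e ≠ 0) (hd : d ≠ 0)
    (hnd : ∀ c : ℝ, 0 < c → e ≠ c • d) :
    ∃ φ : Pt →ₗ[ℝ] ℝ, 0 < φ d ∧ φ e ≤ 0 := by
  rcases eq_or_ne (cross e d) 0 with hc | hc
  · obtain ⟨c, rfl⟩ := exists_smul_of_cross_eq_zero hd hc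
    have hcneg : c < 0 := by
      rcases lt_trichotomy c 0 with h | h | h
      · exact h
      · exfalso; apply he; rw [h, zero_smul]
      · exact absurd rfl (hnd c h)
    refine ⟨innerLin d, innerLin_self_pos hd, ?_⟩
    rw [map_smul]
    have := innerLin_self_pos hd
    simp only [smul_eq_mul]
    nlinarith
  · rcases lt_or_gt_of_ne hc with hneg | hpos
    · refine ⟨-(crossLin e), ?_, ?_⟩
      · simp only [LinearMap.neg_apply, crossLin_apply]
        linarith
      · simp only [LinearMap.neg_apply, crossLin_apply, cross_self]
        simp
    · refine ⟨crossLin e, ?_, ?_⟩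
      · rw [crossLin_apply]; exact hpos
      · rw [crossLin_apply, cross_self]

set_option maxHeartbeats 2000000 in
/-- Openness of visibility when the open segment is contained in the interior. -/
lemma sees_open {P x : Pt} (hPC : P ∈ Γ.carrier) (hx : x ∈ interior Γ.carrier)
    (hall : ∀ t : ℝ, 0 < t → t ≤ 1 → P + t • (x - P) ∈ interior Γ.carrier) :
    ∃ ε : ℝ, 0 < ε ∧ ∀ x' : Pt, dist x' x < ε → Γ.Sees P x' := by
  rcases eq_or_ne P x with rfl | hPx
  · -- trivial case
    obtain ⟨ε, hε, hball⟩ := Metric.mem_nhds_iff.1 (mem_interior_iff_mem_nhds.1 hx)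
    refine ⟨ε, hε, fun x' hx' => ?_⟩
    intro y hy
    have : segment ℝ P x' ⊆ ball P ε :=
      (convex_ball P ε).segment_subset (mem_ball_self hε) (by rwa [mem_ball])
    exact hball (this hy)
  have hd : x - P ≠ 0 := sub_ne_zero.2 (Ne.symm hPx)
  set d := x - P with hdd
  have hdn : 0 < ‖d‖ := norm_pos_iff.2 hd
  by_cases hPi : P ∈ interior Γ.carrier
  · -- interior case: a tube around the whole segment
    have hseg : segment ℝ P x ⊆ interior Γ.carrier := by
      intro y hy
      rcases mem_segment_param.1 hy with ⟨t, ht0, ht1, rfl⟩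
      rcases eq_or_lt_of_le ht0 with h | h
      · rw [← h, zero_smul, add_zero]; exact hPi
      · exact hall t h ht1
    obtain ⟨δ, hδ, hthick⟩ := (isCompact_segment' P x).exists_cthickening_subset_open
      isOpen_interior hseg
    refine ⟨δ, hδ, fun x' hx' => ?_⟩
    intro y hy
    rcases mem_segment_param.1 hy with ⟨t, ht0, ht1, rfl⟩
    apply interior_subset
    apply hthick
    apply Metric.mem_cthickening_of_dist_le _ (P + t • (x - P)) δ _
      (param_mem_segment ht0 ht1)
    rw [dist_eq_norm]
    have h5 : P + t • (x' - P) - (P + t • (x - P)) = t • (x' - x) := by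
      module
    rw [h5, norm_smul, Real.norm_eq_abs, abs_of_nonneg ht0]
    calc t * ‖x' - x‖ ≤ 1 * ‖x' - x‖ :=
          mul_le_mul_of_nonneg_right ht1 (norm_nonneg _)
      _ = ‖x' - x‖ := one_mul _
      _ ≤ δ := by rw [← dist_eq_norm]; exact le_of_lt hx'
  · -- P on the frontier: build a convex cone of good directions at P
    have hPF : P ∈ frontier Γ.carrier := ⟨subset_closure hPC, hPi⟩
    obtain ⟨e₁, e₂, he₁, he₂, r, hr, ℓ, hℓ, hcover, hray1, hray2⟩ := frontier_local Γ hPF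
    -- the ray directions are not positive multiples of d
    have hnd : ∀ e : Pt, (∀ s : ℝ, 0 < s → s ≤ ℓ → P + s • e ∈ frontier Γ.carrier) →
        ∀ c : ℝ, 0 < c → e ≠ c • d := by
      intro e hray c hc habs
      set s1 : ℝ := min ℓ (1 / c) with hs1
      have hs1pos : 0 < s1 := lt_min hℓ (by positivity)
      have h1 : P + s1 • e ∈ frontier Γ.carrier := hray s1 hs1pos (min_le_left _ _)
      have h2 : P + s1 • e ∈ interior Γ.carrier := by
        rw [habs, smul_smul]
        apply hall (s1 * c) (by positivity)
        calc s1 * c ≤ (1 / c) * c := mul_le_mul_of_nonneg_right (min_le_right _ _) (le_of_lt hc)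
          _ = 1 := by field_simp
      exact frontier_not_interior Γ h1 h2
    obtain ⟨φ₁, hφ₁d, hφ₁e⟩ := cone_functional he₁ hd (hnd e₁ hray1)
    obtain ⟨φ₂, hφ₂d, hφ₂e⟩ := cone_functional he₂ hd (hnd e₂ hray2)
    -- an ε₁-ball of directions inside the cone
    have hUopen : IsOpen {w : Pt | 0 < φ₁ w ∧ 0 < φ₂ w} := by
      have h1 : {w : Pt | 0 < φ₁ w ∧ 0 < φ₂ w} = φ₁ ⁻¹' (Ioi 0) ∩ φ₂ ⁻¹' (Ioi 0) := rfl
      rw [h1]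
      exact (isOpen_Ioi.preimage φ₁.continuous_of_finiteDimensional).inter
        (isOpen_Ioi.preimage φ₂.continuous_of_finiteDimensional)
    obtain ⟨ε₁, hε₁, hball₁⟩ := Metric.isOpen_iff.1 hUopen d ⟨hφ₁d, hφ₂d⟩
    -- the convex region
    set V : Set Pt := ball P r ∩ {w | 0 < φ₁ (w - P) ∧ 0 < φ₂ (w - P)} with hV
    have hconvV : Convex ℝ V := by
      apply (convex_ball P r).inter
      have h1 : {w : Pt | 0 < φ₁ (w - P) ∧ 0 < φ₂ (w - P)} =
          {w | φ₁ P < φ₁ w} ∩ {w | φ₂ P < φ₂ w} := by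
        ext w; simp [map_sub, sub_pos]
      rw [h1]
      exact (convex_halfSpace_gt (LinearMap.isLinear φ₁) _).inter
        (convex_halfSpace_gt (LinearMap.isLinear φ₂) _)
    have havoidV : ∀ y ∈ V, y ∉ frontier Γ.carrier := by
      rintro y ⟨hy1, hy2⟩ hyF
      simp only [mem_setOf_eq] at hy2
      obtain ⟨s, hs, h | h⟩ := hcover y hy1 hyF
      · have h5 : y - P = s • e₁ := by rw [h]; abel
        simp only [h5, map_smul, smul_eq_mul] at hy2
        nlinarith [hy2.1, mul_nonneg hs (neg_nonneg.2 hφ₁e)]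
      · have h5 : y - P = s • e₂ := by rw [h]; abel
        simp only [h5, map_smul, smul_eq_mul] at hy2
        nlinarith [hy2.2, mul_nonneg hs (neg_nonneg.2 hφ₂e)]
    -- V is inside the polygon
    set τ : ℝ := min 1 (r / (2 * ‖d‖)) with hτ
    have hτpos : 0 < τ := lt_min one_pos (by positivity)
    have hτr : τ * ‖d‖ < r := by
      have h1 : τ ≤ r / (2 * ‖d‖) := min_le_right _ _
      have h2 : τ * ‖d‖ ≤ (r / (2 * ‖d‖)) * ‖d‖ := mul_le_mul_of_nonneg_right h1 (le_of_lt hdn)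
      have h3 : (r / (2 * ‖d‖)) * ‖d‖ = r / 2 := by field_simp
      linarith
    have hp0 : P + τ • d ∈ V ∩ Γ.carrier := by
      refine ⟨⟨?_, ?_⟩, interior_subset (hall τ hτpos (min_le_left _ _))⟩
      · rw [mem_ball, dist_eq_norm, add_sub_cancel_left, norm_smul,
          Real.norm_eq_abs, abs_of_pos hτpos]
        exact hτr
      · simp only [mem_setOf_eq, add_sub_cancel_left, map_smul, smul_eq_mul]
        constructor <;> nlinarith
    have hVint : V ⊆ interior Γ.carrier :=
      convex_subset_interior hconvV havoidV hp0.1 hp0.2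
    -- the tube over [η, 1]
    set η : ℝ := min 1 (r / (2 * (‖d‖ + ε₁))) with hη
    have hηpos : 0 < η := lt_min one_pos (by positivity)
    have hK : IsCompact ((fun t : ℝ => P + t • d) '' Icc η 1) :=
      isCompact_Icc.image (continuous_const.add (continuous_id.smul continuous_const))
    have hKsub : ((fun t : ℝ => P + t • d) '' Icc η 1) ⊆ interior Γ.carrier := by
      rintro y ⟨t, ⟨ht1, ht2⟩, rfl⟩
      exact hall t (lt_of_lt_of_le hηpos ht1) ht2
    obtain ⟨δ, hδ, hthick⟩ := hK.exists_cthickening_subset_open isOpen_interior hKsub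
    refine ⟨min ε₁ δ, lt_min hε₁ hδ, fun x' hx' => ?_⟩
    intro y hy
    rcases mem_segment_param.1 hy with ⟨t, ht0, ht1, rfl⟩
    rcases eq_or_lt_of_le ht0 with h0 | h0
    · rw [← h0, zero_smul, add_zero]; exact hPC
    rcases le_or_gt t η with hcase | hcase
    · -- initial cone part
      apply interior_subset
      apply hVint
      have hx'P : x' - P ∈ ball d ε₁ := by
        rw [mem_ball, dist_eq_norm]
        have h5 : x' - P - d = x' - x := by rw [hdd]; abel
        rw [h5, ← dist_eq_norm]
        exact lt_of_lt_of_le hx' (min_le_left _ _)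
      have hx'U : (0 < φ₁ (x' - P) ∧ 0 < φ₂ (x' - P)) := hball₁ hx'P
      have hx'n : ‖x' - P‖ < ‖d‖ + ε₁ := by
        calc ‖x' - P‖ = ‖d + (x' - P - d)‖ := by congr 1; abel
          _ ≤ ‖d‖ + ‖x' - P - d‖ := norm_add_le _ _
          _ < ‖d‖ + ε₁ := by
              apply add_lt_add_right
              have h9 := mem_ball.1 hx'P
              rw [dist_eq_norm] at h9
              exact h9
      constructor
      · rw [mem_ball, dist_eq_norm, add_sub_cancel_left, norm_smul,
          Real.norm_eq_abs, abs_of_pos h0]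
        have h6 : t * ‖x' - P‖ < η * (‖d‖ + ε₁) := by
          apply mul_lt_mul' hcase hx'n (norm_nonneg _) hηpos
        have h7 : η * (‖d‖ + ε₁) ≤ r / 2 := by
          have h8 : η ≤ r / (2 * (‖d‖ + ε₁)) := min_le_right _ _
          have h9 : 0 < ‖d‖ + ε₁ := by positivity
          calc η * (‖d‖ + ε₁) ≤ (r / (2 * (‖d‖ + ε₁))) * (‖d‖ + ε₁) :=
                mul_le_mul_of_nonneg_right h8 (le_of_lt h9)
            _ = r / 2 := by field_simp
        linarith
      · simp only [mem_setOf_eq, add_sub_cancel_left, map_smul, smul_eq_mul]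
        constructor <;> nlinarith [hx'U.1, hx'U.2]
    · -- tube part
      apply interior_subset
      apply hthick
      have hmem : (P + t • d) ∈ (fun t : ℝ => P + t • d) '' Icc η 1 :=
        ⟨t, ⟨le_of_lt hcase, ht1⟩, rfl⟩
      apply Metric.mem_cthickening_of_dist_le _ (P + t • d) δ _ hmem
      rw [dist_eq_norm]
      have h5 : P + t • (x' - P) - (P + t • d) = t • (x' - x) := by
        rw [hdd]; module
      rw [h5, norm_smul, Real.norm_eq_abs, abs_of_nonneg ht0]
      calc t * ‖x' - x‖ ≤ 1 * ‖x' - x‖ := mul_le_mul_of_nonneg_right ht1 (norm_nonneg _)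
        _ = ‖x' - x‖ := one_mul _
        _ ≤ δ := by
            rw [← dist_eq_norm]
            exact le_of_lt (lt_of_lt_of_le hx' (min_le_right _ _))

end VisAux
namespace VisAux

open Metric

variable (Γ : SimplePolygon)

lemma vertex_mem_frontier (m : ℤ) : Γ.vertex m ∈ frontier Γ.carrier :=
  edge_subset_frontier Γ m (left_mem_segment ℝ _ _)

lemma frontier_subset_carrier : frontier Γ.carrier ⊆ Γ.carrier := by
  rw [frontier_eq_closure_inter_closure]
  intro y hy
  rw [Γ.compact.isClosed.closure_eq] at hy
  exact hy.1

lemma mem_interior_of_not_frontier {y : Pt} (hy : y ∈ Γ.carrier)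
    (hyF : y ∉ frontier Γ.carrier) : y ∈ interior Γ.carrier := by
  by_contra h
  exact hyF ⟨subset_closure hy, h⟩

/-- If `(P, m)` is feasible and `x` is a visible point on the ray from `P` through
`vertex m` beyond the corner, then `x` lies on the corresponding window. -/
lemma mem_windows_of_ray (A : Set Pt) {P x : Pt} {m : ℤ} {t₀ : ℝ} (hPA : P ∈ A)
    (hfeas : Γ.IsFeasible P m) (ht₀ : 0 ≤ t₀)
    (hx : x = Γ.vertex m + t₀ • (Γ.vertex m - P)) (hseex : Γ.Sees P x) :
    x ∈ Γ.windows A := by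
  set v := Γ.vertex m with hv
  set u : Pt := v - P with hu
  have hune : u ≠ 0 := sub_ne_zero.2 (Ne.symm hfeas.2.1)
  have hun : 0 < ‖u‖ := norm_pos_iff.2 hune
  have hvP : v = P + u := by rw [hu]; abel
  have hray : ∀ t : ℝ, v + t • u = P + (1 + t) • u := by
    intro t; rw [hvP]; module
  -- the distance formula along the ray
  have hdist : ∀ t : ℝ, 0 ≤ t → dist P (v + t • u) = (1 + t) * ‖u‖ := by
    intro t ht
    rw [dist_eq_norm, hray]
    have h5 : P - (P + (1 + t) • u) = -((1 + t) • u) := by abel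
    rw [h5, norm_neg, norm_smul, Real.norm_eq_abs, abs_of_pos (by linarith)]
  -- the boundedness
  obtain ⟨R, hR⟩ := (Γ.compact.isBounded).subset_closedBall v
  have hbdd : ∀ t : ℝ, 0 ≤ t → v + t • u ∈ Γ.carrier → t ≤ R / ‖u‖ := by
    intro t ht hmem
    have h1 : dist (v + t • u) v ≤ R := hR hmem
    rw [dist_eq_norm, add_sub_cancel_left, norm_smul, Real.norm_eq_abs,
      abs_of_nonneg ht] at h1
    rw [le_div_iff₀ hun]
    exact h1
  -- the set of visible frontier parameters
  set TT : Set ℝ := {t : ℝ | 0 ≤ t ∧ v + t • u ∈ frontier Γ.carrier ∧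
    Γ.Sees P (v + t • u)} with hTT
  have hTT0 : (0:ℝ) ∈ TT := by
    refine ⟨le_refl 0, ?_, ?_⟩
    · rw [zero_smul, add_zero]; exact vertex_mem_frontier Γ m
    · rw [zero_smul, add_zero]; exact hfeas.2.2.1
  have hTTbdd : BddAbove TT := by
    refine ⟨R / ‖u‖, fun t ht => ?_⟩
    exact hbdd t ht.1 (frontier_subset_carrier Γ ht.2.1)
  have hTTclosed : IsClosed TT := by
    have hcont : Continuous (fun t : ℝ => v + t • u) :=
      continuous_const.add (continuous_id.smul continuous_const)
    have h1 : TT = {t : ℝ | 0 ≤ t} ∩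
        ((fun t : ℝ => v + t • u) ⁻¹' frontier Γ.carrier ∩
         (fun t : ℝ => v + t • u) ⁻¹' {y | Γ.Sees P y}) := by
      ext t; simp [hTT, mem_setOf_eq]
    rw [h1]
    exact isClosed_Ici.inter ((isClosed_frontier.preimage hcont).inter
      ((isClosed_sees Γ P).preimage hcont))
  set tW := sSup TT with htW
  have htWmem : tW ∈ TT := hTTclosed.csSup_mem ⟨0, hTT0⟩ hTTbdd
  set W := v + tW • u with hW
  -- x lies between v and W
  have hseg : x ∈ segment ℝ v W := by
    -- the farthest visible point at parameter ≥ t₀ lies on the frontier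
    set TT2 : Set ℝ := {t : ℝ | t₀ ≤ t ∧ Γ.Sees P (v + t • u)} with hTT2
    have hTT20 : t₀ ∈ TT2 := ⟨le_refl _, by rw [← hx]; exact hseex⟩
    have hTT2bdd : BddAbove TT2 := by
      refine ⟨R / ‖u‖, fun t ht => ?_⟩
      apply hbdd t (le_trans ht₀ ht.1)
      exact ht.2 (right_mem_segment ℝ _ _)
    have hTT2closed : IsClosed TT2 := by
      have hcont : Continuous (fun t : ℝ => v + t • u) :=
        continuous_const.add (continuous_id.smul continuous_const)
      have h1 : TT2 = {t : ℝ | t₀ ≤ t} ∩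
          (fun t : ℝ => v + t • u) ⁻¹' {y | Γ.Sees P y} := by
        ext t; simp [hTT2, mem_setOf_eq]
      rw [h1]
      exact isClosed_Ici.inter ((isClosed_sees Γ P).preimage hcont)
    set te := sSup TT2 with hte
    have htemem : te ∈ TT2 := hTT2closed.csSup_mem ⟨t₀, hTT20⟩ hTT2bdd
    have hteF : v + te • u ∈ frontier Γ.carrier := by
      by_contra hcon
      have hteC : v + te • u ∈ Γ.carrier := htemem.2 (right_mem_segment ℝ _ _)
      have hteI : v + te • u ∈ interior Γ.carrier :=
        mem_interior_of_not_frontier Γ hteC hcon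
      obtain ⟨ρ, hρ, hball⟩ := Metric.mem_nhds_iff.1 (mem_interior_iff_mem_nhds.1 hteI)
      set t' := te + ρ / (2 * ‖u‖) with ht'
      have ht'te : te < t' := by
        rw [ht']; have : 0 < ρ / (2 * ‖u‖) := by positivity
        linarith
      have hsee' : Γ.Sees P (v + t' • u) := by
        rw [hray]
        apply sees_extend Γ (s₀ := 1 + te) (by
          have := le_trans ht₀ htemem.1; linarith) (by linarith)
        · rw [← hray]; exact htemem.2
        · rw [← hray, ← hray]
          have hsub : segment ℝ (v + te • u) (v + t' • u) ⊆ ball (v + te • u) ρ := by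
            apply (convex_ball _ _).segment_subset (mem_ball_self hρ)
            rw [mem_ball, dist_comm, dist_eq_norm]
            have h5 : v + te • u - (v + t' • u) = -((t' - te) • u) := by module
            rw [h5, norm_neg, norm_smul, Real.norm_eq_abs, abs_of_pos (by linarith)]
            rw [ht']
            have h6 : te + ρ / (2 * ‖u‖) - te = ρ / (2 * ‖u‖) := by ring
            rw [h6]
            have h7 : ρ / (2 * ‖u‖) * ‖u‖ = ρ / 2 := by field_simp
            rw [h7]; linarith
          intro y hy
          exact hball (hsub hy)
      have : t' ≤ te := le_csSup hTT2bdd ⟨by linarith [htemem.1], hsee'⟩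
      linarith
    have hte_le_tW : te ≤ tW :=
      le_csSup hTTbdd ⟨le_trans ht₀ htemem.1, hteF, htemem.2⟩
    have ht₀tW : t₀ ≤ tW := le_trans htemem.1 hte_le_tW
    rcases eq_or_lt_of_le (le_trans (le_trans ht₀ htemem.1) hte_le_tW
        : (0:ℝ) ≤ tW) with h0 | h0
    · -- tW = 0 hence t₀ = 0 and x = v
      have ht₀0 : t₀ = 0 := le_antisymm (by rw [← h0] at ht₀tW; exact ht₀tW) ht₀
      rw [hx, ht₀0, zero_smul, add_zero]
      exact left_mem_segment ℝ _ _
    · rw [mem_segment_param]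
      refine ⟨t₀ / tW, div_nonneg ht₀ (le_of_lt h0), by rw [div_le_one h0]; exact ht₀tW, ?_⟩
      rw [hx, hW]
      have h5 : v + tW • u - v = tW • u := by abel
      rw [h5, smul_smul, div_mul_cancel₀ _ (ne_of_gt h0)]
  -- assemble the window
  have hwin : Γ.IsWindow P (segment ℝ v W) := by
    refine ⟨m, W, hfeas, ⟨tW, htWmem.1, rfl⟩, htWmem.2.1, htWmem.2.2, ?_, rfl⟩
    intro W' hpar hW'F hW'sees
    obtain ⟨t', ht'0, hW'⟩ := hpar
    have hW'' : W' = v + t' • u := hW'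
    subst hW''
    have h1 : t' ≤ tW := le_csSup hTTbdd ⟨ht'0, hW'F, hW'sees⟩
    rw [hdist t' ht'0]
    have h2 : dist P W = (1 + tW) * ‖u‖ := hdist tW htWmem.1
    rw [h2]
    nlinarith [hun]
  rw [SimplePolygon.windows]
  exact ⟨segment ℝ v W, ⟨P, hPA, hwin⟩, hseg⟩

end VisAux
namespace VisAux

open Metric

variable (Γ : SimplePolygon)

/-- Local structure of the frontier at a vertex. -/
lemma vertex_local (i : ℤ) :
    ∃ r : ℝ, 0 < r ∧
      (∀ w ∈ ball (Γ.vertex i) r, w ∈ frontier Γ.carrier →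
        ∃ s : ℝ, 0 ≤ s ∧ (w = Γ.vertex i + s • (Γ.vertex (i - 1) - Γ.vertex i) ∨
          w = Γ.vertex i + s • (Γ.vertex (i + 1) - Γ.vertex i))) ∧
      (∀ s : ℝ, 0 < s → s ≤ 1 →
        Γ.vertex i + s • (Γ.vertex (i - 1) - Γ.vertex i) ∈ frontier Γ.carrier) ∧
      (∀ s : ℝ, 0 < s → s ≤ 1 →
        Γ.vertex i + s • (Γ.vertex (i + 1) - Γ.vertex i) ∈ frontier Γ.carrier) := by
  obtain ⟨r, hr, hloc⟩ := loc_radius Γ (Γ.vertex i)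
  refine ⟨r, hr, ?_, ?_, ?_⟩
  · intro w hw hwF
    obtain ⟨j, _, _, hzj, hwj⟩ := hloc w hw hwF
    rcases vertex_mem_edge Γ hzj with hadj | hadj
    · rw [edge_congr Γ hadj] at hwj
      rcases mem_segment_param.1 hwj with ⟨s, hs0, _, rfl⟩
      exact ⟨s, hs0, Or.inr rfl⟩
    · rw [edge_congr Γ hadj] at hwj
      unfold E at hwj
      rw [sub_add_cancel] at hwj
      rw [segment_symm] at hwj
      rcases mem_segment_param.1 hwj with ⟨s, hs0, _, rfl⟩
      exact ⟨s, hs0, Or.inl rfl⟩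
  · intro s hs0 hs1
    apply edge_subset_frontier Γ (i - 1)
    unfold E
    rw [sub_add_cancel, segment_symm]
    exact param_mem_segment (le_of_lt hs0) hs1
  · intro s hs0 hs1
    apply edge_subset_frontier Γ i
    exact param_mem_segment (le_of_lt hs0) hs1

set_option maxHeartbeats 4000000 in
/-- The central openness lemma: visibility from `P` is locally stable at points off the
windows. -/
lemma main_open (A : Set Pt) {P x : Pt} (hPA : P ∈ A) (hPC : P ∈ Γ.carrier)
    (hx : x ∈ interior Γ.carrier) (hxw : x ∉ Γ.windows A) (hsee : Γ.Sees P x) :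
    ∃ ε : ℝ, 0 < ε ∧ ∀ x' : Pt, dist x' x < ε → Γ.Sees P x' := by
  -- It suffices to prove that the half-open segment (P, x] lies in the interior.
  suffices hall : ∀ t : ℝ, 0 < t → t ≤ 1 → P + t • (x - P) ∈ interior Γ.carrier by
    exact sees_open Γ hPC hx hall
  by_contra hcon
  push_neg at hcon
  obtain ⟨t₁, ht₁0, ht₁1, ht₁⟩ := hcon
  have hPx : P ≠ x := by
    rintro rfl
    apply ht₁
    have h5 : P + t₁ • (P - P) = P := by rw [sub_self, smul_zero, add_zero]
    rw [h5]
    exact hx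
  set d : Pt := x - P with hdd
  have hd : d ≠ 0 := sub_ne_zero.2 (Ne.symm hPx)
  have hsegC : ∀ t : ℝ, 0 ≤ t → t ≤ 1 → P + t • d ∈ Γ.carrier := by
    intro t h0 h1
    exact hsee (param_mem_segment h0 h1)
  have ht₁F : P + t₁ • d ∈ frontier Γ.carrier := by
    refine ⟨subset_closure (hsegC t₁ (le_of_lt ht₁0) ht₁1), ht₁⟩
  set T : Set ℝ := {t : ℝ | 0 ≤ t ∧ t ≤ 1 ∧ P + t • d ∈ frontier Γ.carrier} with hT
  have hTne : T.Nonempty := ⟨t₁, le_of_lt ht₁0, ht₁1, ht₁F⟩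
  have hTbdd : BddAbove T := ⟨1, fun t ht => ht.2.1⟩
  have hTclosed : IsClosed T := by
    have hcont : Continuous (fun t : ℝ => P + t • d) :=
      continuous_const.add (continuous_id.smul continuous_const)
    have h1 : T = Icc 0 1 ∩ (fun t : ℝ => P + t • d) ⁻¹' frontier Γ.carrier := by
      ext t; simp [hT, Icc, mem_setOf_eq]; tauto
    rw [h1]
    exact isClosed_Icc.inter (isClosed_frontier.preimage hcont)
  set ts := sSup T with hts
  have htsmem : ts ∈ T := hTclosed.csSup_mem hTne hTbdd
  have hts0 : 0 < ts := lt_of_lt_of_le ht₁0 (le_csSup hTbdd ⟨le_of_lt ht₁0, ht₁1, ht₁F⟩)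
  have hts1 : ts < 1 := by
    rcases lt_or_eq_of_le htsmem.2.1 with h | h
    · exact h
    · exfalso
      have := htsmem.2.2
      rw [h, one_smul, hdd] at this
      have h5 : P + (x - P) = x := by abel
      rw [h5] at this
      exact frontier_not_interior Γ this hx
  set z : Pt := P + ts • d with hz
  have hzF : z ∈ frontier Γ.carrier := htsmem.2.2
  have hzP : z - P = ts • d := by rw [hz]; abel
  have hafter : ∀ s : ℝ, 0 < s → s ≤ 1 - ts → z + s • d ∈ interior Γ.carrier := by
    intro s h0 h1
    have h2 : z + s • d = P + (ts + s) • d := by rw [hz]; module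
    rw [h2]
    apply mem_interior_of_not_frontier Γ (hsegC _ (by linarith) (by linarith))
    intro hF
    have : ts + s ≤ ts := le_csSup hTbdd ⟨by linarith, by linarith, hF⟩
    linarith
  have hbefore : ∀ s : ℝ, 0 < s → s ≤ ts → z - s • d ∈ Γ.carrier := by
    intro s h0 h1
    have h2 : z - s • d = P + (ts - s) • d := by rw [hz]; module
    rw [h2]
    exact hsegC _ (by linarith) (by linarith)
  have hafterC : ∀ s : ℝ, 0 < s → s ≤ 1 - ts → z + s • d ∈ Γ.carrier :=
    fun s h0 h1 => interior_subset (hafter s h0 h1)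
  have h1ts : 0 < 1 - ts := by linarith
  by_cases hv : ∃ i : ℤ, z = Γ.vertex i
  · -- the grazing point is a vertex
    obtain ⟨i, hzi⟩ := hv
    obtain ⟨r, hr, hcover, hray1, hray2⟩ := vertex_local Γ i
    set u₁ : Pt := Γ.vertex (i - 1) - Γ.vertex i with hu₁
    set u₂ : Pt := Γ.vertex (i + 1) - Γ.vertex i with hu₂
    have hu₁ne : u₁ ≠ 0 := by
      rw [hu₁, sub_ne_zero]
      intro h
      have h2 := vertex_ne_succ Γ (i - 1)
      rw [sub_add_cancel] at h2
      exact h2 h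
    have hu₂ne : u₂ ≠ 0 := by
      rw [hu₂, sub_ne_zero]
      exact fun h => vertex_ne_succ Γ i h.symm
    -- neither wall points in the direction of d
    have hnd : ∀ u : Pt,
        (∀ s : ℝ, 0 < s → s ≤ 1 → Γ.vertex i + s • u ∈ frontier Γ.carrier) →
        ∀ c : ℝ, 0 < c → u ≠ c • d := by
      intro u hray c hc habs
      set s1 : ℝ := min 1 ((1 - ts) / c) with hs1
      have hs1pos : 0 < s1 := lt_min one_pos (by positivity)
      have h1 : Γ.vertex i + s1 • u ∈ frontier Γ.carrier := hray s1 hs1pos (min_le_left _ _)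
      have h2 : Γ.vertex i + s1 • u ∈ interior Γ.carrier := by
        rw [habs, smul_smul, ← hzi]
        apply hafter (s1 * c) (by positivity)
        calc s1 * c ≤ ((1 - ts) / c) * c :=
              mul_le_mul_of_nonneg_right (min_le_right _ _) (le_of_lt hc)
          _ = 1 - ts := by field_simp
      exact frontier_not_interior Γ h1 h2
    have hnd1 : ∀ c : ℝ, 0 < c → u₁ ≠ c • d := hnd u₁ hray1
    have hnd2 : ∀ c : ℝ, 0 < c → u₂ ≠ c • d := hnd u₂ hray2
    rcases eq_or_ne (cross u₁ u₂) 0 with hD | hD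
    · -- degenerate: the two walls are collinear
      have hcr : cross u₂ u₁ = 0 := by unfold cross at hD ⊢; linarith
      obtain ⟨c, hc⟩ := exists_smul_of_cross_eq_zero hu₁ne hcr
      have hcne : c ≠ 0 := by rintro rfl; rw [zero_smul] at hc; exact hu₂ne hc
      rcases lt_or_gt_of_ne hcne with hcneg | hcpos
      · -- straight vertex: use the half-plane argument
        apply halfplane_absurd Γ (crossLin u₁) hzF hr
          (z := z) (d := d) (σ₁ := 1 - ts) (σ₂ := ts) ?_ ?_ h1ts hts0 hafterC hbefore
        · intro w hw hwF
          rw [hzi] at hw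
          obtain ⟨s, _, h | h⟩ := hcover w hw hwF
          · have h5 : w - z = s • u₁ := by rw [h, hzi]; abel
            rw [h5, map_smul, crossLin_apply, cross_self, smul_eq_mul, mul_zero]
          · have h5 : w - z = s • u₂ := by rw [h, hzi]; abel
            rw [h5, hc, map_smul, map_smul, crossLin_apply, cross_self]
            simp
        · rw [crossLin_apply]
          intro hcrd
          obtain ⟨c', hc'⟩ := exists_smul_of_cross_eq_zero hd hcrd
          rcases lt_trichotomy c' 0 with h | h | h
          · apply hnd2 (c * c') (by nlinarith)
            rw [hc, hc', smul_smul]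
          · apply hu₁ne; rw [hc', h, zero_smul]
          · exact hnd1 c' h hc'
      · -- the two walls overlap: contradiction with the polygon axioms
        have hadj := Γ.adj_edges (i - 1) i (by rw [sub_add_cancel]; exact ⟨0, by ring⟩)
          (by
            intro h5
            have h6 : i - (i - 1) = 1 := by ring
            rw [h6] at h5
            have := Int.le_of_dvd one_pos h5
            have := Γ.three_le
            omega)
        set s₀ : ℝ := min 1 c with hs₀
        have hs₀pos : 0 < s₀ := lt_min one_pos hcpos
        have hp₀ : Γ.vertex i + s₀ • u₁ ∈
            segment ℝ (Γ.vertex (i - 1)) (Γ.vertex (i - 1 + 1)) ∩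
            segment ℝ (Γ.vertex i) (Γ.vertex (i + 1)) := by
          constructor
          · rw [sub_add_cancel, segment_symm]
            exact param_mem_segment (le_of_lt hs₀pos) (min_le_left _ _)
          · have h5 : Γ.vertex i + s₀ • u₁ = Γ.vertex i + (s₀ / c) • u₂ := by
              rw [hc, smul_smul, div_mul_cancel₀ _ hcne]
            rw [h5]
            exact param_mem_segment (by positivity)
              (by rw [div_le_one hcpos]; exact min_le_right _ _)
        rw [hadj] at hp₀
        have h5 : s₀ • u₁ = 0 := by
          have h6 : Γ.vertex i + s₀ • u₁ = Γ.vertex i := hp₀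
          exact add_left_cancel (by rw [h6, add_zero])
        rcases smul_eq_zero.1 h5 with h | h
        · exact absurd h (ne_of_gt hs₀pos)
        · exact hu₁ne h
    · -- nondegenerate corner: full quadrant analysis
      have hFz : ∀ w ∈ ball z r, w ∈ frontier Γ.carrier →
          ∃ s : ℝ, 0 ≤ s ∧ (w = z + s • u₁ ∨ w = z + s • u₂) := by
        intro w hw hwF
        rw [hzi] at hw
        obtain ⟨s, hs, h | h⟩ := hcover w hw hwF
        · exact ⟨s, hs, Or.inl (by rw [h, hzi])⟩
        · exact ⟨s, hs, Or.inr (by rw [h, hzi])⟩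
      obtain ⟨hC1, hC2, hQ⟩ := quad_analysis Γ hD hd hzF hr hFz h1ts hts0
        hafterC hbefore hnd1 hnd2
      set A' := mkLin (u₂ 1 / cross u₁ u₂) (-(u₂ 0) / cross u₁ u₂) with hA'
      set B' := mkLin (-(u₁ 1) / cross u₁ u₂) (u₁ 0 / cross u₁ u₂) with hB'
      obtain ⟨hAu₁, hAu₂, hBu₁, hBu₂⟩ := coord_u hD
      set α := A' d with hα
      set β := B' d with hβ
      have hαβ : ¬(α = 0 ∧ β = 0) := by
        rintro ⟨h1, h2⟩
        apply hd
        have h3 := span_coords hD d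
        rw [← hA', ← hB', ← hα, ← hβ, h1, h2] at h3
        simpa using h3
      have hray1' : ¬(0 < α ∧ β = 0) := by
        rintro ⟨h1, h2⟩
        apply hnd1 (1 / α) (by positivity)
        have h3 := span_coords hD d
        rw [← hA', ← hB', ← hα, ← hβ, h2, zero_smul, add_zero] at h3
        rw [h3, smul_smul, one_div, inv_mul_cancel₀ (ne_of_gt h1), one_smul]
      have hray2' : ¬(α = 0 ∧ 0 < β) := by
        rintro ⟨h1, h2⟩
        apply hnd2 (1 / β) (by positivity)
        have h3 := span_coords hD d
        rw [← hA', ← hB', ← hα, ← hβ, h1, zero_smul, zero_add] at h3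
        rw [h3, smul_smul, one_div, inv_mul_cancel₀ (ne_of_gt h2), one_smul]
      -- the corner is reflex
      have hreflex : Γ.IsReflexCorner i := by
        refine ⟨r / (‖u₁ + u₂‖ + 1), by positivity, ?_⟩
        intro ε hε0 hεδ
        have h5 : Γ.vertex i + ε • ((Γ.vertex (i - 1) - Γ.vertex i) +
            (Γ.vertex (i + 1) - Γ.vertex i)) = z + ε • (u₁ + u₂) := by
          rw [hzi, hu₁, hu₂]
        rw [h5]
        apply hQ
        · rw [mem_ball, dist_eq_norm, add_sub_cancel_left, norm_smul,
            Real.norm_eq_abs, abs_of_pos hε0]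
          calc ε * ‖u₁ + u₂‖ ≤ ε * (‖u₁ + u₂‖ + 1) := by nlinarith
            _ < (r / (‖u₁ + u₂‖ + 1)) * (‖u₁ + u₂‖ + 1) := by
                apply mul_lt_mul_of_pos_right hεδ (by positivity)
            _ = r := by field_simp
        · rw [add_sub_cancel_left, map_smul, map_add, hAu₁, hAu₂, smul_eq_mul]
          linarith
        · rw [add_sub_cancel_left, map_smul, map_add, hBu₁, hBu₂, smul_eq_mul]
          linarith
      -- the mixed-signs relation
      have hzero : |β| * α + |α| * β = 0 := by
        rcases lt_trichotomy α 0 with h1 | h1 | h1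
        · rcases lt_trichotomy β 0 with h2 | h2 | h2
          · exact absurd ⟨h1, h2⟩ hC2
          · rw [h2, abs_zero, abs_of_neg h1]; ring
          · rw [abs_of_pos h2, abs_of_neg h1]; ring
        · rcases lt_trichotomy β 0 with h2 | h2 | h2
          · rw [h1, abs_of_neg h2, abs_zero]; ring
          · exact absurd ⟨h1, h2⟩ hαβ
          · exact absurd ⟨h1, h2⟩ hray2'
        · rcases lt_trichotomy β 0 with h2 | h2 | h2
          · rw [abs_of_neg h2, abs_of_pos h1]; ring
          · exact absurd ⟨h1, h2⟩ hray1'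
          · exact absurd ⟨h1, h2⟩ hC1
      -- the feasibility functional
      set f : Pt →ₗ[ℝ] ℝ := |β| • A' + |α| • B' with hf
      have hfd : f d = 0 := by
        rw [hf]
        simp only [LinearMap.add_apply, LinearMap.smul_apply, smul_eq_mul]
        rw [← hα, ← hβ]
        exact hzero
      have hfeas : Γ.IsFeasible P i := by
        refine ⟨hreflex, ?_, ?_, f, ?_, ?_, ?_, ?_⟩
        · intro h
          apply hd
          have h5 : P + ts • d = P := by rw [← hz, hzi, ← h]
          have h6 : ts • d = 0 := add_eq_left.1 h5
          rcases smul_eq_zero.1 h6 with h7 | h7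
          · exact absurd h7 (ne_of_gt hts0)
          · exact h7
        · rw [← hzi]
          intro y hy
          apply hsee
          apply (convex_segment P x).segment_subset (left_mem_segment ℝ _ _) _ hy
          rw [hz]
          exact param_mem_segment (le_of_lt hts0) (le_of_lt hts1)
        · intro h0
          have h1 : f u₁ = 0 := by rw [h0]; rfl
          have h2 : f u₂ = 0 := by rw [h0]; rfl
          rw [hf] at h1 h2
          simp only [LinearMap.add_apply, LinearMap.smul_apply, smul_eq_mul] at h1 h2
          rw [hAu₁, hBu₁] at h1
          rw [hAu₂, hBu₂] at h2
          apply hαβ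
          constructor
          · rw [← abs_eq_zero]; linarith
          · rw [← abs_eq_zero]; linarith
        · have h5 : Γ.vertex i - P = ts • d := by rw [← hzi]; exact hzP
          rw [h5, map_smul, hfd, smul_eq_mul, mul_zero]
        · have h5 : Γ.vertex (i - 1) - P = u₁ + ts • d := by
            rw [hu₁, ← hzi, ← hzP]; abel
          rw [h5, map_add, map_smul, hfd, smul_eq_mul, mul_zero, add_zero, hf]
          simp only [LinearMap.add_apply, LinearMap.smul_apply, smul_eq_mul]
          rw [hAu₁, hBu₁]
          positivity
        · have h5 : Γ.vertex (i + 1) - P = u₂ + ts • d := by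
            rw [hu₂, ← hzi, ← hzP]; abel
          rw [h5, map_add, map_smul, hfd, smul_eq_mul, mul_zero, add_zero, hf]
          simp only [LinearMap.add_apply, LinearMap.smul_apply, smul_eq_mul]
          rw [hAu₂, hBu₂]
          positivity
      -- x lies on the window through this corner
      apply hxw
      apply mem_windows_of_ray Γ A hPA hfeas
        (t₀ := (1 - ts) / ts) (by positivity) ?_ hsee
      rw [← hzi]
      have h5 : z - P = ts • d := hzP
      rw [h5, smul_smul, div_mul_cancel₀ _ (ne_of_gt hts0), hz, hdd]
      module
  · -- the grazing point is interior to an edge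
    push_neg at hv
    obtain ⟨k, _, _, hzk⟩ := frontier_mem_edge Γ hzF
    rcases mem_segment_param.1 hzk with ⟨lam, hl0, hl1, hzeq⟩
    set b : Pt := Γ.vertex (k + 1) - Γ.vertex k with hb
    have hbne : b ≠ 0 := by
      rw [hb, sub_ne_zero]; exact fun h => vertex_ne_succ Γ k h.symm
    have hlam0 : 0 < lam := by
      rcases lt_or_eq_of_le hl0 with h | h
      · exact h
      · exfalso; apply hv k; rw [hzeq, ← h, zero_smul, add_zero]
    have hlam1 : lam < 1 := by
      rcases lt_or_eq_of_le hl1 with h | h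
      · exact h
      · exfalso; apply hv (k + 1)
        rw [hzeq, h, one_smul, hb]
        abel
    obtain ⟨r, hr, hloc⟩ := loc_radius Γ z
    have hFz : ∀ w ∈ ball z r, w ∈ frontier Γ.carrier → w ∈ E Γ k := by
      intro w hw hwF
      obtain ⟨j, _, _, hzj, hwj⟩ := hloc w hw hwF
      have hjk := nonvertex_mem_edge Γ hzk hzj (fun i h => hv i h)
      rw [edge_congr Γ hjk] at hwj
      exact hwj
    rcases eq_or_ne (cross b d) 0 with hcr | hcr
    · -- d is parallel to the edge: points just past z are on the edge, contradiction
      obtain ⟨c, hc⟩ := exists_smul_of_cross_eq_zero hd hcr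
      have hcne : c ≠ 0 := by rintro rfl; rw [zero_smul] at hc; exact hbne hc
      set s₀ : ℝ := min (1 - ts) (min lam (1 - lam) * |c|) with hs₀
      have hs₀pos : 0 < s₀ := by
        apply lt_min h1ts
        apply mul_pos (lt_min hlam0 (by linarith)) (abs_pos.2 hcne)
      have h1 : z + s₀ • d ∈ interior Γ.carrier := hafter s₀ hs₀pos (min_le_left _ _)
      have h2 : z + s₀ • d ∈ frontier Γ.carrier := by
        apply edge_subset_frontier Γ k
        have h5 : d = (1 / c) • b := by
          rw [hc, smul_smul, one_div, inv_mul_cancel₀ hcne, one_smul]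
        have h6 : z + s₀ • d = Γ.vertex k + (lam + s₀ / c) • b := by
          rw [hzeq, h5]
          module
        rw [h6]
        have habs : |s₀ / c| ≤ min lam (1 - lam) := by
          rw [abs_div]
          rw [div_le_iff₀ (abs_pos.2 hcne)]
          calc |s₀| = s₀ := abs_of_pos hs₀pos
            _ ≤ min lam (1 - lam) * |c| := min_le_right _ _
        have habs' := abs_le.1 habs
        apply param_mem_segment
        · have := min_le_left lam (1 - lam); linarith [habs'.1]
        · have := min_le_right lam (1 - lam); linarith [habs'.2]
      exact frontier_not_interior Γ h2 h1
    · -- d is transversal to the edge: half-plane argument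
      apply halfplane_absurd Γ (crossLin b) hzF hr
        (z := z) (d := d) (σ₁ := 1 - ts) (σ₂ := ts) ?_ ?_ h1ts hts0 hafterC hbefore
      · intro w hw hwF
        have hwk := hFz w hw hwF
        rcases mem_segment_param.1 hwk with ⟨mu, _, _, rfl⟩
        have h5 : Γ.vertex k + mu • (Γ.vertex (k + 1) - Γ.vertex k) - z =
            (mu - lam) • b := by
          rw [hzeq, hb]
          module
        rw [h5, map_smul, crossLin_apply, cross_self, smul_eq_mul, mul_zero]
      · rw [crossLin_apply]; exact hcr

end VisAux
/-- any two points in the interior of a single visibility region of the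
visibility decomposition with respect to `A` are seen by the same subset of `A`. -/
theorem visibility_region_same_view (Γ : SimplePolygon) (A : Set Pt)
    (hA : A ⊆ Γ.carrier) (hAfin : A.Finite)
    (z : Pt) (hz : z ∈ interior Γ.carrier \ Γ.windows A)
    (x y : Pt)
    (hx : x ∈ connectedComponentIn (interior Γ.carrier \ Γ.windows A) z)
    (hy : y ∈ connectedComponentIn (interior Γ.carrier \ Γ.windows A) z) :
    {P ∈ A | Γ.Sees P x} = {P ∈ A | Γ.Sees P y} := by
  classical
  set S : Set Pt := interior Γ.carrier \ Γ.windows A with hS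
  set K : Set Pt := connectedComponentIn S z with hK
  have hKS : K ⊆ S := connectedComponentIn_subset S z
  have hiff : ∀ P ∈ A, (Γ.Sees P x ↔ Γ.Sees P y) := by
    intro P hP
    set Vs : Set Pt := {q : Pt | Γ.Sees P q} with hVs
    have hVsclosed : IsClosed Vs := VisAux.isClosed_sees Γ P
    have hKsub : K ⊆ interior Vs ∪ Vsᶜ := by
      intro q hq
      by_cases hqs : Γ.Sees P q
      · left
        obtain ⟨ε, hε, hball⟩ := VisAux.main_open Γ A hP (hA hP)
          (hKS hq).1 (hKS hq).2 hqs
        rw [mem_interior]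
        refine ⟨Metric.ball q ε, ?_, Metric.isOpen_ball, Metric.mem_ball_self hε⟩
        intro q' hq'
        exact hball q' (Metric.mem_ball.1 hq')
      · right; exact hqs
    have hdisj : Disjoint (interior Vs) Vsᶜ :=
      Disjoint.mono_left interior_subset disjoint_compl_right
    have hpre : IsPreconnected K := isPreconnected_connectedComponentIn
    rcases hpre.subset_or_subset isOpen_interior hVsclosed.isOpen_compl hdisj hKsub with
      h | h
    · constructor
      · intro _
        have h3 : y ∈ Vs := interior_subset (h hy)
        exact h3
      · intro _
        have h3 : x ∈ Vs := interior_subset (h hx)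
        exact h3
    · constructor
      · intro hxx; exact absurd hxx (h hx)
      · intro hyy; exact absurd hyy (h hy)
  ext P
  simp only [Set.mem_setOf_eq]
  constructor
  · rintro ⟨h1, h2⟩; exact ⟨h1, (hiff P h1).1 h2⟩
  · rintro ⟨h1, h2⟩; exact ⟨h1, (hiff P h1).2 h2⟩
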